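/- arXiv:1602.05355 — 3 statements merged into one kernel-verified Lean document; each statement's English description precedes it below -/
import Mathlib

section
/- Sequence-space boundedness of the hard-sphere BBGKY collision operators: Let N ≥ 1, ε > 0, β > β' > 0, b > 0 and b' > (β/β')^{3/2} b. Then there exists a constant C > 0, depending only on β, β', b, b' (and not on N, ε, j), such that for every sequence f = (f_k)_{k≥1} of measurable functions f_k : (ℝ³×ℝ³)^k → ℝ with ‖f‖_{b,β} := sup_k b^{-k}‖f_k‖_{k,β} < ∞, one has sup_{1 ≤ j ≤ N−1} b'^{-j} ‖C̃^ε_{j+1} f_{j+1}‖_{j,β'} ≤ C N ε² ‖f‖_{b,β}; i.e. the sequence of operators {C̃^ε_{j+1}}_{j≥1} maps the space with norm ‖·‖_{b,β} boundedly into the space with norm ‖·‖_{b',β'}. -/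
set_option maxHeartbeats 1000000


open MeasureTheory Real Metric
open scoped ENNReal RealInnerProductSpace

noncomputable section

/-- Three-dimensional Euclidean space. -/
abbrev V3 := EuclideanSpace ℝ (Fin 3)

/-- The `j`-particle phase space `(ℝ³ × ℝ³)^j`. -/
abbrev Phase (j : ℕ) := Fin j → V3 × V3

/-- The weighted sup-norm `‖f‖_{j,β}`. -/
def wnorm (β : ℝ) (j : ℕ) (f : Phase j → ℝ) : ℝ≥0∞ :=
  ⨆ z : Phase j, ENNReal.ofReal
    (|f z| * (β / (2 * π)) ^ (-(3 * (j : ℝ) / 2)) *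
      Real.exp (β * ∑ i, ‖(z i).2‖ ^ 2 / 2))

/-- The norm `‖f‖_{b,β} = sup_{k ≥ 1} b^{-k} ‖f_k‖_{k,β}` on sequences of
`k`-particle functions. -/
def seqNorm (b β : ℝ) (f : (k : ℕ) → Phase k → ℝ) : ℝ≥0∞ :=
  ⨆ (k : ℕ) (_ : 1 ≤ k), ENNReal.ofReal (b ^ (-(k : ℝ))) * wnorm β k (f k)

/-- The surface measure on the unit sphere `S² ⊂ ℝ³`. -/
def sphereMeasure : Measure (sphere (0 : V3) 1) := (volume : Measure V3).toSphere

/-- The hard-sphere BBGKY collision operator `C̃^ε_{j+1}`. -/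
def collHS (N : ℕ) (ε : ℝ) (j : ℕ) (g : Phase (j + 1) → ℝ) : Phase j → ℝ :=
  fun z =>
    ((N : ℝ) - j) * ε ^ 2 *
      ∑ i : Fin j,
        ∫ ω : sphere (0 : V3) 1, ∫ v : V3,
          ⟪(ω : V3), v - (z i).2⟫ * g (Fin.snoc z ((z i).1 + ε • (ω : V3), v))
            ∂volume ∂sphereMeasure

section Aux

lemma helper_mul_exp_neg {t a : ℝ} (ht : 0 < t) (ha : 0 ≤ a) :
    a * Real.exp (-(t * a)) ≤ 1 / t := by
  have h1 : t * a ≤ Real.exp (t * a) := by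
    have := Real.add_one_le_exp (t * a); linarith
  rw [Real.exp_neg, ← div_eq_mul_inv, div_le_div_iff₀ (Real.exp_pos _) ht]
  nlinarith [Real.exp_pos (t * a)]

lemma aux_mul_exp {δ : ℝ} (hδ : 0 < δ) (r : ℝ) (hr : 0 ≤ r) :
    r * Real.exp (-(δ * r ^ 2 / 2)) ≤ Real.exp (δ / 2) / δ := by
  have h1 : -(δ * r ^ 2 / 2) ≤ -(δ * r) + δ / 2 := by nlinarith [sq_nonneg (r - 1)]
  have h2 : r * Real.exp (-(δ * r ^ 2 / 2)) ≤ r * Real.exp (-(δ * r) + δ / 2) :=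
    mul_le_mul_of_nonneg_left (Real.exp_le_exp.2 h1) hr
  have h3 := helper_mul_exp_neg hδ hr
  calc r * Real.exp (-(δ * r ^ 2 / 2)) ≤ r * Real.exp (-(δ * r) + δ / 2) := h2
    _ = (r * Real.exp (-(δ * r))) * Real.exp (δ / 2) := by rw [Real.exp_add]; ring
    _ ≤ (1 / δ) * Real.exp (δ / 2) :=
        mul_le_mul_of_nonneg_right h3 (Real.exp_pos _).le
    _ = Real.exp (δ / 2) / δ := by ring

lemma aux_j_pow {q : ℝ} (hq0 : 0 < q) (hq1 : q < 1) (j : ℕ) :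
    (j : ℝ) * q ^ j ≤ 1 / Real.log (1 / q) := by
  have hL0 : 0 < Real.log (1 / q) := Real.log_pos ((one_lt_div hq0).2 hq1)
  have hq : q ^ j = Real.exp (-(Real.log (1 / q) * j)) := by
    rw [one_div, Real.log_inv, neg_mul, neg_neg, mul_comm, Real.exp_nat_mul,
      Real.exp_log hq0]
  rw [hq]
  exact helper_mul_exp_neg hL0 (Nat.cast_nonneg j)

lemma integrable_gauss {c : ℝ} (hc : 0 < c) :
    Integrable (fun v : V3 => Real.exp (-(c * ‖v‖ ^ 2))) := by
  have h := (GaussianFourier.integrable_cexp_neg_mul_sq_norm_add (V := V3) (b := (c : ℂ))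
    (by simpa using hc) 0 0).norm
  refine h.congr (Filter.Eventually.of_forall fun v => ?_)
  simp only [Complex.norm_exp]
  norm_num [Complex.add_re, Complex.mul_re, ← Complex.ofReal_pow]

lemma integrable_norm_gauss {c : ℝ} (hc : 0 < c) :
    Integrable (fun v : V3 => ‖v‖ * Real.exp (-(c * ‖v‖ ^ 2))) := by
  have hg := ((integrable_gauss (by linarith : (0:ℝ) < c / 2)).const_mul
    (Real.exp (c / 2) / c))
  refine hg.mono ?_ (Filter.Eventually.of_forall fun v => ?_)
  · exact (continuous_norm.mul (by continuity)).aestronglyMeasurable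
  · have h1 : ‖v‖ * Real.exp (-(c * ‖v‖ ^ 2 / 2)) ≤ Real.exp (c / 2) / c :=
      aux_mul_exp hc ‖v‖ (norm_nonneg v)
    have h2 : Real.exp (-(c * ‖v‖ ^ 2)) =
        Real.exp (-(c * ‖v‖ ^ 2 / 2)) * Real.exp (-(c / 2 * ‖v‖ ^ 2)) := by
      rw [← Real.exp_add]; ring_nf
    have h3 : (0:ℝ) ≤ Real.exp (-(c / 2 * ‖v‖ ^ 2)) := (Real.exp_pos _).le
    rw [Real.norm_eq_abs, Real.norm_eq_abs, abs_of_nonneg (by positivity),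
      abs_of_nonneg (by positivity), h2, ← mul_assoc]
    exact mul_le_mul_of_nonneg_right h1 h3

instance : IsFiniteMeasure sphereMeasure :=
  inferInstanceAs (IsFiniteMeasure (volume : Measure V3).toSphere)

lemma snoc_sum (j : ℕ) (z : Phase j) (w : V3 × V3) :
    ∑ i : Fin (j + 1), ‖((Fin.snoc z w : Phase (j + 1)) i).2‖ ^ 2 / 2
      = (∑ i : Fin j, ‖(z i).2‖ ^ 2 / 2) + ‖w.2‖ ^ 2 / 2 := by
  rw [Fin.sum_univ_castSucc]
  simp

lemma sphere_int_bound (c K : ℝ) (hc : 0 < c) (hK : 0 ≤ K) (u : V3)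
    (φ : sphere (0 : V3) 1 → V3 → ℝ)
    (hφ : ∀ ω v, |φ ω v| ≤ K * Real.exp (-(c * ‖v‖ ^ 2))) :
    ‖∫ ω : sphere (0 : V3) 1, ∫ v : V3, ⟪(ω : V3), v - u⟫ * φ ω v ∂volume ∂sphereMeasure‖
      ≤ (sphereMeasure Set.univ).toReal *
        (K * ((∫ v : V3, ‖v‖ * Real.exp (-(c * ‖v‖ ^ 2))) +
          ‖u‖ * ∫ v : V3, Real.exp (-(c * ‖v‖ ^ 2)))) := by
  set I1 := ∫ v : V3, ‖v‖ * Real.exp (-(c * ‖v‖ ^ 2)) with hI1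
  set I0 := ∫ v : V3, Real.exp (-(c * ‖v‖ ^ 2)) with hI0
  set B := K * (I1 + ‖u‖ * I0) with hB
  have hinner : ∀ ω : sphere (0 : V3) 1,
      ‖∫ v : V3, ⟪(ω : V3), v - u⟫ * φ ω v ∂volume‖ ≤ B := by
    intro ω
    have h1 : ‖∫ v : V3, ⟪(ω : V3), v - u⟫ * φ ω v ∂volume‖
        ≤ ∫ v : V3, ‖⟪(ω : V3), v - u⟫ * φ ω v‖ ∂volume :=
      norm_integral_le_integral_norm _
    have hint : Integrable (fun v : V3 =>
        K * (‖v‖ * Real.exp (-(c * ‖v‖ ^ 2))) +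
          (K * ‖u‖) * Real.exp (-(c * ‖v‖ ^ 2))) :=
      ((integrable_norm_gauss hc).const_mul K).add
        ((integrable_gauss hc).const_mul (K * ‖u‖))
    have h2 : ∫ v : V3, ‖⟪(ω : V3), v - u⟫ * φ ω v‖ ∂volume
        ≤ ∫ v : V3, (K * (‖v‖ * Real.exp (-(c * ‖v‖ ^ 2))) +
            (K * ‖u‖) * Real.exp (-(c * ‖v‖ ^ 2))) ∂volume := by
      refine integral_mono_of_nonneg (Filter.Eventually.of_forall fun v => norm_nonneg _)
        hint (Filter.Eventually.of_forall fun v => ?_)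
      have hin : |⟪(ω : V3), v - u⟫| ≤ ‖v‖ + ‖u‖ := by
        calc |⟪(ω : V3), v - u⟫| ≤ ‖(ω : V3)‖ * ‖v - u‖ := abs_real_inner_le_norm _ _
          _ = ‖v - u‖ := by rw [norm_eq_of_mem_sphere ω, one_mul]
          _ ≤ ‖v‖ + ‖u‖ := norm_sub_le _ _
      have hφv := hφ ω v
      have he : (0:ℝ) ≤ Real.exp (-(c * ‖v‖ ^ 2)) := (Real.exp_pos _).le
      show ‖_ * _‖ ≤ _
      rw [norm_mul, Real.norm_eq_abs, Real.norm_eq_abs]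
      calc |⟪(ω : V3), v - u⟫| * |φ ω v|
          ≤ (‖v‖ + ‖u‖) * (K * Real.exp (-(c * ‖v‖ ^ 2))) := by
            apply mul_le_mul hin hφv (abs_nonneg _)
            positivity
        _ = K * (‖v‖ * Real.exp (-(c * ‖v‖ ^ 2))) +
            (K * ‖u‖) * Real.exp (-(c * ‖v‖ ^ 2)) := by ring
    have h3 : ∫ v : V3, (K * (‖v‖ * Real.exp (-(c * ‖v‖ ^ 2))) +
        (K * ‖u‖) * Real.exp (-(c * ‖v‖ ^ 2))) ∂volume = B := by
      rw [integral_add (((integrable_norm_gauss hc).const_mul K))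
        ((integrable_gauss hc).const_mul (K * ‖u‖)),
        integral_const_mul, integral_const_mul, hB, ← hI0, ← hI1]
      ring
    calc ‖∫ v : V3, ⟪(ω : V3), v - u⟫ * φ ω v ∂volume‖
        ≤ ∫ v : V3, ‖⟪(ω : V3), v - u⟫ * φ ω v‖ ∂volume := h1
      _ ≤ _ := h2
      _ = B := h3
  have hB0 : 0 ≤ B := le_trans (norm_nonneg _) (hinner ⟨EuclideanSpace.single 0 1, by
    simp⟩)
  calc ‖∫ ω : sphere (0 : V3) 1, ∫ v : V3, ⟪(ω : V3), v - u⟫ * φ ω v ∂volume ∂sphereMeasure‖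
      ≤ ∫ ω : sphere (0 : V3) 1, ‖∫ v : V3, ⟪(ω : V3), v - u⟫ * φ ω v ∂volume‖ ∂sphereMeasure :=
        norm_integral_le_integral_norm _
    _ ≤ ∫ _ω : sphere (0 : V3) 1, B ∂sphereMeasure := by
        refine integral_mono_of_nonneg (Filter.Eventually.of_forall fun ω => norm_nonneg _)
          (integrable_const _) (Filter.Eventually.of_forall fun ω => hinner ω)
    _ = (sphereMeasure Set.univ).toReal * B := by rw [integral_const, smul_eq_mul, Measure.real]

end Aux

/-- Sequence-space boundedness of the hard-sphere BBGKY collision operators: there is a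
constant `C > 0`, depending only on `β, β', b, b'` (not on `N`, `ε`, `j`), such that
`sup_{1 ≤ j ≤ N−1} b'^{-j} ‖C̃^ε_{j+1} f_{j+1}‖_{j,β'} ≤ C N ε² ‖f‖_{b,β}`. -/
theorem collHS_seq_bound (β β' b b' : ℝ) (hβ' : 0 < β') (hβ : β' < β)
    (hb : 0 < b) (hb' : (β / β') ^ ((3 : ℝ) / 2) * b < b') :
    ∃ C : ℝ, 0 < C ∧
      ∀ (N : ℕ), 1 ≤ N → ∀ (ε : ℝ), 0 < ε →
        ∀ (f : (k : ℕ) → Phase k → ℝ), (∀ k, Measurable (f k)) →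
          seqNorm b β f < ⊤ →
          ∀ j : ℕ, 1 ≤ j → j ≤ N - 1 →
            ENNReal.ofReal (b' ^ (-(j : ℝ))) * wnorm β' j (collHS N ε j (f (j + 1))) ≤
              ENNReal.ofReal (C * N * ε ^ 2) * seqNorm b β f := by
  have hβ0 : 0 < β := hβ'.trans hβ
  have hπ : (0:ℝ) < 2 * π := by positivity
  have hx0 : (0:ℝ) < β / (2 * π) := by positivity
  have hx'0 : (0:ℝ) < β' / (2 * π) := by positivity
  have hb'0 : 0 < b' := lt_trans (by positivity) hb'
  set p : ℝ := (β / β') ^ ((3:ℝ)/2) with hp_def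
  have hp0 : 0 < p := Real.rpow_pos_of_pos (by positivity) _
  set q : ℝ := p * b / b' with hq_def
  have hq0 : 0 < q := by positivity
  have hq1 : q < 1 := by rw [hq_def, div_lt_one hb'0]; exact hb'
  set L := Real.log (1 / q) with hL_def
  have hL0 : 0 < L := Real.log_pos ((one_lt_div hq0).2 hq1)
  set δ := β - β' with hδ_def
  have hδ0 : 0 < δ := by rw [hδ_def]; linarith
  set K0 := ∫ v : V3, Real.exp (-(β / 2 * ‖v‖ ^ 2)) with hK0_def
  set K1 := ∫ v : V3, ‖v‖ * Real.exp (-(β / 2 * ‖v‖ ^ 2)) with hK1_def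
  have hK00 : 0 ≤ K0 := integral_nonneg fun v => (Real.exp_pos _).le
  have hK10 : 0 ≤ K1 := integral_nonneg fun v => by positivity
  set σ := (sphereMeasure Set.univ).toReal with hσ_def
  have hσ0 : 0 ≤ σ := ENNReal.toReal_nonneg
  set D := K1 + K0 * (Real.exp (δ / 2) / δ) with hD_def
  have hD0 : 0 ≤ D := by
    have : 0 ≤ K0 * (Real.exp (δ / 2) / δ) := mul_nonneg hK00 (by positivity)
    rw [hD_def]; linarith
  have hx32 : (0:ℝ) ≤ (β / (2 * π)) ^ ((3:ℝ)/2) := (Real.rpow_pos_of_pos hx0 _).le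
  set CC := σ * D * (β / (2 * π)) ^ ((3:ℝ)/2) * b / L + 1 with hCC_def
  have hCCa : 0 ≤ σ * D * (β / (2 * π)) ^ ((3:ℝ)/2) * b / L :=
    div_nonneg (mul_nonneg (mul_nonneg (mul_nonneg hσ0 hD0) hx32) hb.le) hL0.le
  have hCC0 : 0 < CC := by rw [hCC_def]; linarith
  refine ⟨CC, hCC0, ?_⟩
  intro N hN ε hε f hf hS j hj1 hjN
  have hjN' : j + 1 ≤ N := by omega
  have hNj : (j:ℝ) + 1 ≤ (N:ℝ) := by exact_mod_cast hjN'
  have hNj0 : (0:ℝ) ≤ (N:ℝ) - j := by linarith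
  set g := f (j + 1) with hg_def
  set W := wnorm β (j + 1) g with hW_def
  have hWS : ENNReal.ofReal (b ^ (-((j + 1 : ℕ) : ℝ))) * W ≤ seqNorm b β f := by
    rw [hW_def, hg_def, seqNorm]
    exact le_iSup₂ (f := fun (k : ℕ) (_ : 1 ≤ k) =>
      ENNReal.ofReal (b ^ (-(k : ℝ))) * wnorm β k (f k)) (j + 1) (by omega)
  have hbj1 : (0:ℝ) < b ^ (-((j + 1 : ℕ) : ℝ)) := Real.rpow_pos_of_pos hb _
  have hWtop : W ≠ ⊤ := by
    intro hWt
    rw [hWt, ENNReal.mul_top (ENNReal.ofReal_pos.2 hbj1).ne'] at hWS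
    exact hS.ne (top_le_iff.1 hWS)
  set M := W.toReal with hM_def
  have hM0 : 0 ≤ M := ENNReal.toReal_nonneg
  have hMW : W = ENNReal.ofReal M := (ENNReal.ofReal_toReal hWtop).symm
  -- pointwise bound on g
  have hgb : ∀ w : Phase (j + 1),
      |g w| ≤ M * (β / (2 * π)) ^ (3 * ((j + 1 : ℕ) : ℝ) / 2) *
        Real.exp (-(β * ∑ i, ‖(w i).2‖ ^ 2 / 2)) := by
    intro w
    have h1 : ENNReal.ofReal (|g w| * (β / (2 * π)) ^ (-(3 * ((j + 1 : ℕ) : ℝ) / 2)) *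
        Real.exp (β * ∑ i, ‖(w i).2‖ ^ 2 / 2)) ≤ W := by
      rw [hW_def, wnorm]
      exact le_iSup (fun z : Phase (j + 1) => ENNReal.ofReal
        (|g z| * (β / (2 * π)) ^ (-(3 * ((j + 1 : ℕ) : ℝ) / 2)) *
          Real.exp (β * ∑ i, ‖(z i).2‖ ^ 2 / 2))) w
    rw [hMW] at h1
    have h2 := (ENNReal.ofReal_le_ofReal_iff hM0).1 h1
    have hpos : (0:ℝ) < (β / (2 * π)) ^ (-(3 * ((j + 1 : ℕ) : ℝ) / 2)) *
        Real.exp (β * ∑ i, ‖(w i).2‖ ^ 2 / 2) :=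
      mul_pos (Real.rpow_pos_of_pos hx0 _) (Real.exp_pos _)
    rw [mul_assoc] at h2
    have h3 := (le_div_iff₀ hpos).2 h2
    refine h3.trans_eq ?_
    rw [Real.rpow_neg hx0.le, div_eq_mul_inv, mul_inv, inv_inv, ← Real.exp_neg]
    ring
  -- per-z bound (real inequality)
  have key : ∀ z : Phase j,
      b' ^ (-(j : ℝ)) * (|collHS N ε j g z| * (β' / (2 * π)) ^ (-(3 * (j : ℝ) / 2)) *
        Real.exp (β' * ∑ i, ‖(z i).2‖ ^ 2 / 2))
      ≤ CC * N * ε ^ 2 * (b ^ (-((j + 1 : ℕ) : ℝ)) * M) := by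
    intro z
    set T := ∑ i : Fin j, ‖(z i).2‖ ^ 2 / 2 with hT_def
    have hT0 : 0 ≤ T := by
      rw [hT_def]; exact Finset.sum_nonneg fun i _ => by positivity
    set Kz := M * (β / (2 * π)) ^ (3 * ((j + 1 : ℕ) : ℝ) / 2) * Real.exp (-(β * T))
      with hKz_def
    have hKz0 : 0 ≤ Kz := by
      rw [hKz_def]
      exact mul_nonneg (mul_nonneg hM0 (Real.rpow_nonneg hx0.le _)) (Real.exp_pos _).le
    have hi : ∀ i : Fin j,
        ‖∫ ω : sphere (0:V3) 1, ∫ v : V3,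
            ⟪(ω : V3), v - (z i).2⟫ * g (Fin.snoc z ((z i).1 + ε • (ω : V3), v))
            ∂volume ∂sphereMeasure‖
          ≤ σ * (Kz * (K1 + ‖(z i).2‖ * K0)) := by
      intro i
      have hb2 : (0:ℝ) < β / 2 := by linarith
      have hcore := sphere_int_bound (β / 2) Kz hb2 hKz0 (z i).2
        (fun ω v => g (Fin.snoc z ((z i).1 + ε • (ω : V3), v))) ?_
      · rw [hσ_def, hK1_def, hK0_def]
        exact hcore
      · intro ω v
        have h4 := hgb (Fin.snoc z ((z i).1 + ε • (ω : V3), v))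
        rw [snoc_sum, ← hT_def] at h4
        refine h4.trans_eq ?_
        rw [hKz_def,
          show -(β * (T + ‖v‖ ^ 2 / 2)) = -(β * T) + -(β / 2 * ‖v‖ ^ 2) by ring,
          Real.exp_add]
        ring
    have h6 : |collHS N ε j g z| ≤ ((N:ℝ) - j) * ε ^ 2 *
        (σ * (Kz * ∑ i : Fin j, (K1 + ‖(z i).2‖ * K0))) := by
      simp only [collHS]
      rw [abs_mul, abs_of_nonneg (mul_nonneg hNj0 (sq_nonneg ε))]
      have hsum_abs : |∑ i : Fin j,
          ∫ ω : sphere (0:V3) 1, ∫ v : V3,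
            ⟪(ω : V3), v - (z i).2⟫ * g (Fin.snoc z ((z i).1 + ε • (ω : V3), v))
            ∂volume ∂sphereMeasure|
          ≤ ∑ i : Fin j, σ * (Kz * (K1 + ‖(z i).2‖ * K0)) :=
        (Finset.abs_sum_le_sum_abs _ _).trans (Finset.sum_le_sum fun i _ => hi i)
      calc ((N:ℝ) - j) * ε ^ 2 * |∑ i : Fin j,
            ∫ ω : sphere (0:V3) 1, ∫ v : V3,
              ⟪(ω : V3), v - (z i).2⟫ * g (Fin.snoc z ((z i).1 + ε • (ω : V3), v))
              ∂volume ∂sphereMeasure|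
          ≤ ((N:ℝ) - j) * ε ^ 2 * ∑ i : Fin j, σ * (Kz * (K1 + ‖(z i).2‖ * K0)) :=
            mul_le_mul_of_nonneg_left hsum_abs (mul_nonneg hNj0 (sq_nonneg ε))
        _ = ((N:ℝ) - j) * ε ^ 2 *
            (σ * (Kz * ∑ i : Fin j, (K1 + ‖(z i).2‖ * K0))) := by
            simp only [Finset.mul_sum]
    have hsum : (∑ i : Fin j, (K1 + ‖(z i).2‖ * K0)) * Real.exp (-(δ * T)) ≤ j * D := by
      rw [Finset.sum_mul]
      have hper : ∀ i ∈ Finset.univ, (K1 + ‖(z i).2‖ * K0) * Real.exp (-(δ * T)) ≤ D := by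
        intro i _
        have hTi : ‖(z i).2‖ ^ 2 / 2 ≤ T := by
          rw [hT_def]
          exact Finset.single_le_sum (f := fun k => ‖(z k).2‖ ^ 2 / 2)
            (fun k _ => by positivity) (Finset.mem_univ i)
        have he1 : Real.exp (-(δ * T)) ≤ 1 :=
          Real.exp_le_one_iff.2 (neg_nonpos.2 (mul_nonneg hδ0.le hT0))
        have he2 : Real.exp (-(δ * T)) ≤ Real.exp (-(δ * ‖(z i).2‖ ^ 2 / 2)) := by
          apply Real.exp_le_exp.2
          have h9 := mul_le_mul_of_nonneg_left hTi hδ0.le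
          have h10 : δ * (‖(z i).2‖ ^ 2 / 2) = δ * ‖(z i).2‖ ^ 2 / 2 := by ring
          rw [h10] at h9
          exact neg_le_neg h9
        have he3 : ‖(z i).2‖ * Real.exp (-(δ * T)) ≤ Real.exp (δ / 2) / δ :=
          le_trans (mul_le_mul_of_nonneg_left he2 (norm_nonneg _))
            (aux_mul_exp hδ0 _ (norm_nonneg _))
        have h7 : K1 * Real.exp (-(δ * T)) ≤ K1 := mul_le_of_le_one_right hK10 he1
        have h8 : (‖(z i).2‖ * K0) * Real.exp (-(δ * T)) ≤ K0 * (Real.exp (δ / 2) / δ) := by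
          calc (‖(z i).2‖ * K0) * Real.exp (-(δ * T))
              = K0 * (‖(z i).2‖ * Real.exp (-(δ * T))) := by ring
            _ ≤ K0 * (Real.exp (δ / 2) / δ) := mul_le_mul_of_nonneg_left he3 hK00
        calc (K1 + ‖(z i).2‖ * K0) * Real.exp (-(δ * T))
            = K1 * Real.exp (-(δ * T)) + (‖(z i).2‖ * K0) * Real.exp (-(δ * T)) := by ring
          _ ≤ K1 + K0 * (Real.exp (δ / 2) / δ) := add_le_add h7 h8
          _ = D := hD_def.symm
      calc ∑ i : Fin j, (K1 + ‖(z i).2‖ * K0) * Real.exp (-(δ * T))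
          ≤ ∑ _i : Fin j, D := Finset.sum_le_sum hper
        _ = j * D := by
            rw [Finset.sum_const, Finset.card_univ, Fintype.card_fin, nsmul_eq_mul]
    have hexp : Real.exp (-(β * T)) * Real.exp (β' * T) = Real.exp (-(δ * T)) := by
      rw [← Real.exp_add]
      congr 1
      rw [hδ_def]; ring
    have hXpos : (0:ℝ) < (β' / (2 * π)) ^ (-(3 * (j : ℝ) / 2)) :=
      Real.rpow_pos_of_pos hx'0 _
    have hBjpos : (0:ℝ) < b' ^ (-(j : ℝ)) := Real.rpow_pos_of_pos hb'0 _
    have hPre0 : (0:ℝ) ≤ ((N:ℝ) - j) * ε ^ 2 * σ * M *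
        ((β / (2 * π)) ^ (3 * ((j + 1 : ℕ) : ℝ) / 2) *
          (β' / (2 * π)) ^ (-(3 * (j : ℝ) / 2)) * b' ^ (-(j : ℝ))) := by
      apply mul_nonneg
      apply mul_nonneg (mul_nonneg (mul_nonneg hNj0 (sq_nonneg ε)) hσ0) hM0
      exact mul_nonneg (mul_nonneg (Real.rpow_nonneg hx0.le _) hXpos.le) hBjpos.le
    -- scalar bound
    have hGid : (β / (2 * π)) ^ (3 * ((j + 1 : ℕ) : ℝ) / 2) *
        (β' / (2 * π)) ^ (-(3 * (j : ℝ) / 2)) * b' ^ (-(j : ℝ)) * b ^ ((j : ℝ) + 1)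
        = (β / (2 * π)) ^ ((3:ℝ)/2) * b * q ^ j := by
      have e1 : (β / (2 * π)) ^ (3 * ((j + 1 : ℕ) : ℝ) / 2)
          = (β / (2 * π)) ^ (3 * (j : ℝ) / 2) * (β / (2 * π)) ^ ((3:ℝ)/2) := by
        rw [← Real.rpow_add hx0]
        congr 1
        push_cast
        ring
      have e2 : (β / (2 * π)) ^ (3 * (j : ℝ) / 2)
          = (β / β') ^ (3 * (j : ℝ) / 2) * (β' / (2 * π)) ^ (3 * (j : ℝ) / 2) := by
        rw [← Real.mul_rpow (by positivity) hx'0.le]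
        congr 1
        field_simp
      have e3 : b ^ ((j : ℝ) + 1) = (b / b') ^ ((j : ℝ)) * b' ^ ((j : ℝ)) * b := by
        rw [Real.rpow_add hb, Real.rpow_one, ← Real.mul_rpow (by positivity) hb'0.le,
          div_mul_cancel₀ _ hb'0.ne']
      have e4 : (β / β') ^ (3 * (j : ℝ) / 2) = p ^ j := by
        rw [hp_def, ← Real.rpow_natCast ((β / β') ^ ((3:ℝ)/2)) j,
          ← Real.rpow_mul (by positivity : (0:ℝ) ≤ β / β')]
        congr 1
        ring
      have e5 : (b / b') ^ ((j : ℝ)) = (b / b') ^ (j : ℕ) := Real.rpow_natCast _ _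
      have n1 : (β' / (2 * π)) ^ (3 * (j : ℝ) / 2) ≠ 0 :=
        (Real.rpow_pos_of_pos hx'0 _).ne'
      have n2 : b' ^ ((j : ℝ)) ≠ 0 := (Real.rpow_pos_of_pos hb'0 _).ne'
      rw [e1, e2, e3, e4, e5, Real.rpow_neg hx'0.le, Real.rpow_neg hb'0.le,
        hq_def, show p * b / b' = p * (b / b') by ring, mul_pow]
      field_simp
    have hscalar : σ * D * (j : ℝ) *
        ((β / (2 * π)) ^ (3 * ((j + 1 : ℕ) : ℝ) / 2) *
          (β' / (2 * π)) ^ (-(3 * (j : ℝ) / 2)) * b' ^ (-(j : ℝ)))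
        ≤ CC * b ^ (-((j + 1 : ℕ) : ℝ)) := by
      have hbp : (0:ℝ) < b ^ ((j : ℝ) + 1) := Real.rpow_pos_of_pos hb _
      rw [← mul_le_mul_iff_of_pos_right hbp]
      have hcancel : b ^ (-((j + 1 : ℕ) : ℝ)) * b ^ ((j : ℝ) + 1) = 1 := by
        rw [← Real.rpow_add hb,
          show (-((j + 1 : ℕ) : ℝ) + ((j : ℝ) + 1)) = 0 by push_cast; ring,
          Real.rpow_zero]
      calc σ * D * (j : ℝ) *
            ((β / (2 * π)) ^ (3 * ((j + 1 : ℕ) : ℝ) / 2) *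
              (β' / (2 * π)) ^ (-(3 * (j : ℝ) / 2)) * b' ^ (-(j : ℝ))) * b ^ ((j : ℝ) + 1)
          = σ * D * (j : ℝ) *
            ((β / (2 * π)) ^ (3 * ((j + 1 : ℕ) : ℝ) / 2) *
              (β' / (2 * π)) ^ (-(3 * (j : ℝ) / 2)) * b' ^ (-(j : ℝ)) * b ^ ((j : ℝ) + 1)) := by
            ring
        _ = σ * D * (j : ℝ) * ((β / (2 * π)) ^ ((3:ℝ)/2) * b * q ^ j) := by rw [hGid]
        _ = (σ * D * (β / (2 * π)) ^ ((3:ℝ)/2) * b) * ((j : ℝ) * q ^ j) := by ring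
        _ ≤ (σ * D * (β / (2 * π)) ^ ((3:ℝ)/2) * b) * (1 / L) := by
            apply mul_le_mul_of_nonneg_left _ (mul_nonneg (mul_nonneg (mul_nonneg hσ0 hD0) hx32) hb.le)
            rw [hL_def]
            exact aux_j_pow hq0 hq1 j
        _ = σ * D * (β / (2 * π)) ^ ((3:ℝ)/2) * b / L := by ring
        _ ≤ CC := by rw [hCC_def]; linarith
        _ = CC * b ^ (-((j + 1 : ℕ) : ℝ)) * b ^ ((j : ℝ) + 1) := by
            rw [mul_assoc, hcancel, mul_one]
    -- assemble
    calc b' ^ (-(j : ℝ)) * (|collHS N ε j g z| * (β' / (2 * π)) ^ (-(3 * (j : ℝ) / 2)) *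
          Real.exp (β' * T))
        ≤ b' ^ (-(j : ℝ)) * ((((N:ℝ) - j) * ε ^ 2 *
            (σ * (Kz * ∑ i : Fin j, (K1 + ‖(z i).2‖ * K0)))) *
            (β' / (2 * π)) ^ (-(3 * (j : ℝ) / 2)) * Real.exp (β' * T)) := by
          apply mul_le_mul_of_nonneg_left _ hBjpos.le
          apply mul_le_mul_of_nonneg_right _ (Real.exp_pos _).le
          exact mul_le_mul_of_nonneg_right h6 hXpos.le
      _ = ((N:ℝ) - j) * ε ^ 2 * σ * M *
            ((β / (2 * π)) ^ (3 * ((j + 1 : ℕ) : ℝ) / 2) *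
              (β' / (2 * π)) ^ (-(3 * (j : ℝ) / 2)) * b' ^ (-(j : ℝ))) *
            ((∑ i : Fin j, (K1 + ‖(z i).2‖ * K0)) * Real.exp (-(δ * T))) := by
          rw [hKz_def, ← hexp]
          ring
      _ ≤ ((N:ℝ) - j) * ε ^ 2 * σ * M *
            ((β / (2 * π)) ^ (3 * ((j + 1 : ℕ) : ℝ) / 2) *
              (β' / (2 * π)) ^ (-(3 * (j : ℝ) / 2)) * b' ^ (-(j : ℝ))) * ((j : ℝ) * D) :=
          mul_le_mul_of_nonneg_left hsum hPre0
      _ = ((N:ℝ) - j) * ε ^ 2 * M * (σ * D * (j : ℝ) *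
            ((β / (2 * π)) ^ (3 * ((j + 1 : ℕ) : ℝ) / 2) *
              (β' / (2 * π)) ^ (-(3 * (j : ℝ) / 2)) * b' ^ (-(j : ℝ)))) := by ring
      _ ≤ ((N:ℝ) - j) * ε ^ 2 * M * (CC * b ^ (-((j + 1 : ℕ) : ℝ))) := by
          apply mul_le_mul_of_nonneg_left hscalar
          exact mul_nonneg (mul_nonneg hNj0 (sq_nonneg ε)) hM0
      _ ≤ (N:ℝ) * ε ^ 2 * M * (CC * b ^ (-((j + 1 : ℕ) : ℝ))) := by
          apply mul_le_mul_of_nonneg_right _ (mul_nonneg hCC0.le hbj1.le)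
          have hNN : (N:ℝ) - j ≤ (N:ℝ) := sub_le_self _ (Nat.cast_nonneg j)
          exact mul_le_mul_of_nonneg_right
            (mul_le_mul_of_nonneg_right hNN (sq_nonneg ε)) hM0
      _ = CC * N * ε ^ 2 * (b ^ (-((j + 1 : ℕ) : ℝ)) * M) := by ring
  -- conclude in ℝ≥0∞
  rw [wnorm, ENNReal.mul_iSup]
  refine iSup_le fun z => ?_
  rw [← ENNReal.ofReal_mul (Real.rpow_nonneg hb'0.le _)]
  calc ENNReal.ofReal (b' ^ (-(j : ℝ)) *
        (|collHS N ε j g z| * (β' / (2 * π)) ^ (-(3 * (j : ℝ) / 2)) *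
          Real.exp (β' * ∑ i, ‖(z i).2‖ ^ 2 / 2)))
      ≤ ENNReal.ofReal (CC * N * ε ^ 2 * (b ^ (-((j + 1 : ℕ) : ℝ)) * M)) :=
        ENNReal.ofReal_le_ofReal (key z)
    _ = ENNReal.ofReal (CC * N * ε ^ 2) *
        (ENNReal.ofReal (b ^ (-((j + 1 : ℕ) : ℝ))) * ENNReal.ofReal M) := by
        rw [ENNReal.ofReal_mul (mul_nonneg (mul_nonneg hCC0.le (Nat.cast_nonneg N)) (sq_nonneg ε)),
          ENNReal.ofReal_mul hbj1.le]
    _ ≤ ENNReal.ofReal (CC * N * ε ^ 2) * seqNorm b β f := by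
        apply mul_le_mul_right
        rw [← hMW]
        exact hWS
end
end

section
/- Weighted-norm bound for the Boltzmann hierarchy collision operator: Let j ≥ 1 and β > β' > 0. There exists a constant c_β > 0, depending only on β (and not on j or β'), such that for every measurable g : (ℝ³×ℝ³)^{j+1} → ℝ with ‖g‖_{j+1,β} < ∞, the function C_{j+1} g is well defined and satisfies ‖C_{j+1} g‖_{j,β'} ≤ c_β (β/β')^{3j/2} [ √j / √(β−β') + j ] ‖g‖_{j+1,β}. -/
set_option maxHeartbeats 1000000


open MeasureTheory Real Metric
open scoped ENNReal RealInnerProductSpace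

noncomputable section

instance inst_s4 : IsFiniteMeasure sphereMeasure := by unfold sphereMeasure; infer_instance

lemma self_le_exp_half_sq (y : ℝ) : y ≤ Real.exp (y^2/2) := by
  rcases le_or_gt y 0 with h | h
  · exact h.trans (Real.exp_pos _).le
  · have := Real.add_one_le_exp (y^2/2)
    nlinarith

lemma integrable_gaussV3 {b : ℝ} (hb : 0 < b) :
    Integrable (fun v : V3 => Real.exp (-(b * ‖v‖^2))) := by
  have h := (GaussianFourier.integrable_cexp_neg_mul_sq_norm_add (V := V3)
    (b := (b:ℂ)) (by simpa using hb) 0 0).norm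
  have : ∀ v : V3, ‖Complex.exp (-(b:ℂ) * (‖v‖:ℂ)^2 + 0 * ⟪(0:V3), v⟫)‖
      = Real.exp (-(b * ‖v‖^2)) := by
    intro v
    rw [Complex.norm_exp]
    have : (-(b:ℂ) * (‖v‖:ℂ)^2 + 0 * ⟪(0:V3), v⟫).re = -(b * ‖v‖^2) := by
      rw [← Complex.ofReal_pow, zero_mul, add_zero, neg_mul, ← Complex.ofReal_mul,
        ← Complex.ofReal_neg, Complex.ofReal_re]
    rw [this]
  refine h.congr (ae_of_all _ fun v => (this v))

lemma integrable_norm_gaussV3 {b : ℝ} (hb : 0 < b) :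
    Integrable (fun v : V3 => ‖v‖ * Real.exp (-(b * ‖v‖^2))) := by
  have hmeas : AEStronglyMeasurable (fun v : V3 => ‖v‖ * Real.exp (-(b * ‖v‖^2))) volume :=
    (continuous_norm.mul (Real.continuous_exp.comp (by continuity))).aestronglyMeasurable
  refine ((integrable_gaussV3 (b := b/2) (by positivity)).const_mul ((Real.sqrt b)⁻¹)).mono'
    hmeas (ae_of_all _ fun v => ?_)
  have h1 : Real.sqrt b * ‖v‖ ≤ Real.exp (b * ‖v‖^2 / 2) := by
    have h := self_le_exp_half_sq (Real.sqrt b * ‖v‖)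
    have hb2 : (Real.sqrt b)^2 = b := Real.sq_sqrt hb.le
    calc Real.sqrt b * ‖v‖ ≤ Real.exp ((Real.sqrt b * ‖v‖)^2/2) := h
      _ = Real.exp (b * ‖v‖^2 / 2) := by rw [mul_pow, hb2]
  have hsb : 0 < Real.sqrt b := Real.sqrt_pos.2 hb
  have key : Real.sqrt b * (‖v‖ * Real.exp (-(b * ‖v‖^2))) ≤ Real.exp (-(b/2 * ‖v‖^2)) := by
    have h := mul_le_mul_of_nonneg_right h1 (Real.exp_pos (-(b*‖v‖^2))).le
    rw [← Real.exp_add] at h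
    calc Real.sqrt b * (‖v‖ * Real.exp (-(b * ‖v‖^2)))
        = Real.sqrt b * ‖v‖ * Real.exp (-(b * ‖v‖^2)) := by ring
      _ ≤ Real.exp (b * ‖v‖^2/2 + -(b * ‖v‖^2)) := h
      _ = Real.exp (-(b/2 * ‖v‖^2)) := by ring_nf
  rw [Real.norm_eq_abs, abs_of_nonneg (by positivity)]
  nlinarith [Real.exp_pos (-(b/2 * ‖v‖^2)), mul_pos hsb (Real.sqrt_pos.2 hb),
    mul_inv_cancel₀ hsb.ne', mul_nonneg (norm_nonneg v) (Real.exp_pos (-(b * ‖v‖^2))).le]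

lemma energy_id (a bv ω : V3) (hω : ‖ω‖ = 1) :
    ‖a - ⟪a - bv, ω⟫ • ω‖^2 + ‖bv + ⟪a - bv, ω⟫ • ω‖^2 = ‖a‖^2 + ‖bv‖^2 := by
  set t : ℝ := ⟪a - bv, ω⟫ with ht
  have hsm : ‖t • ω‖^2 = t^2 := by
    rw [norm_smul, Real.norm_eq_abs, mul_pow, sq_abs, hω]; ring
  have h1 : ‖a - t • ω‖^2 = ‖a‖^2 - 2 * (t * ⟪a, ω⟫) + t^2 := by
    rw [norm_sub_sq_real, real_inner_smul_right, hsm]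
  have h2 : ‖bv + t • ω‖^2 = ‖bv‖^2 + 2 * (t * ⟪bv, ω⟫) + t^2 := by
    rw [norm_add_sq_real, real_inner_smul_right, hsm]
  have h3 : t = ⟪a, ω⟫ - ⟪bv, ω⟫ := by rw [ht, inner_sub_left]
  rw [h1, h2]
  linear_combination (2*t) * h3

lemma sum_snoc (j : ℕ) (z : Phase j) (b : V3 × V3) (q : V3 × V3 → ℝ) :
    ∑ i : Fin (j+1), q ((Fin.snoc z b : Phase (j+1)) i) = (∑ i, q (z i)) + q b := by
  rw [Fin.sum_univ_castSucc]
  simp [Fin.snoc_castSucc, Fin.snoc_last]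

lemma sum_update (j : ℕ) (z : Phase j) (k : Fin j) (a : V3 × V3) (q : V3 × V3 → ℝ) :
    ∑ i, q ((Function.update z k a : Phase j) i) = (∑ i, q (z i)) - q (z k) + q a := by
  have h : ∀ i, q (Function.update z k a i)
      = Function.update (fun i => q (z i)) k (q a) i :=
    fun i => Function.apply_update (fun _ p => q p) z k a i
  simp_rw [h]
  rw [Finset.sum_update_of_mem (Finset.mem_univ k),
    ← Finset.sum_erase_add Finset.univ _ (Finset.mem_univ k), Finset.erase_eq]
  ring

lemma measurable_updateFun {α : Type*} [MeasurableSpace α] {j : ℕ} (z : Phase j) (k : Fin j)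
    {H : α → V3 × V3} (hH : Measurable H) :
    Measurable (fun x => Function.update z k (H x)) := by
  apply measurable_pi_lambda
  intro i
  by_cases h : i = k
  · subst h; simpa [Function.update_self] using hH
  · simp only [Function.update_apply, if_neg h]
    exact measurable_const

lemma measurable_snocFun {α : Type*} [MeasurableSpace α] {j : ℕ}
    {F : α → Phase j} {G : α → V3 × V3} (hF : Measurable F) (hG : Measurable G) :
    Measurable (fun x => (Fin.snoc (F x) (G x) : Phase (j+1))) := by
  apply measurable_pi_lambda
  intro i
  refine Fin.lastCases ?_ (fun i' => ?_) i
  · simpa only [Fin.snoc_last] using hG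
  · simp only [Fin.snoc_castSucc]
    exact (measurable_pi_apply i').comp hF

def I0c (β : ℝ) : ℝ := ∫ v : V3, Real.exp (-(β/2 * ‖v‖^2))
def I1c (β : ℝ) : ℝ := ∫ v : V3, ‖v‖ * Real.exp (-(β/2 * ‖v‖^2))
def SmC : ℝ := (sphereMeasure Set.univ).toReal

lemma key (j : ℕ) (β M' P Sz : ℝ) (hβ : 0 < β) (hM' : 0 ≤ M') (hP : 0 ≤ P)
    (g : Phase (j+1) → ℝ) (hgm : Measurable g)
    (hg : ∀ w : Phase (j+1), |g w| ≤ M' * P * Real.exp (-(β * ∑ i, ‖(w i).2‖^2/2)))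
    (vk : V3) (T : sphere (0:V3) 1 × V3 → Phase (j+1)) (hT : Measurable T)
    (hTsum : ∀ p : sphere (0:V3) 1 × V3, (∑ i, ‖(T p i).2‖^2/2) = Sz + ‖p.2‖^2/2) :
    Integrable (fun p : sphere (0:V3) 1 × V3 =>
        if 0 ≤ ⟪(p.1:V3), vk - p.2⟫ then ⟪(p.1:V3), vk - p.2⟫ * g (T p) else 0)
      (sphereMeasure.prod volume) ∧
    |∫ p : sphere (0:V3) 1 × V3,
        (if 0 ≤ ⟪(p.1:V3), vk - p.2⟫ then ⟪(p.1:V3), vk - p.2⟫ * g (T p) else 0)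
        ∂(sphereMeasure.prod volume)|
      ≤ M' * P * Real.exp (-(β * Sz)) * (SmC * (‖vk‖ * I0c β + I1c β)) := by
  set C : ℝ := M' * P * Real.exp (-(β * Sz)) with hC
  have hCpos : 0 ≤ C := by positivity
  set f : sphere (0:V3) 1 × V3 → ℝ := fun p =>
    if 0 ≤ ⟪(p.1:V3), vk - p.2⟫ then ⟪(p.1:V3), vk - p.2⟫ * g (T p) else 0 with hf
  set q : V3 → ℝ := fun v => (‖vk‖ + ‖v‖) * Real.exp (-(β/2 * ‖v‖^2)) with hqdef
  set h : sphere (0:V3) 1 × V3 → ℝ := fun p => C * ((1:ℝ) * q p.2) with hhdef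
  have hip : Continuous (fun p : sphere (0:V3) 1 × V3 => ⟪(p.1:V3), vk - p.2⟫) :=
    Continuous.inner (continuous_subtype_val.comp continuous_fst)
      (continuous_const.sub continuous_snd)
  have hmf : Measurable f :=
    Measurable.ite (measurableSet_le measurable_const hip.measurable)
      (hip.measurable.mul (hgm.comp hT)) measurable_const
  have hβ2 : 0 < β/2 := by positivity
  have hq : Integrable q := by
    have h1 := (integrable_gaussV3 hβ2).const_mul ‖vk‖
    have h2 := integrable_norm_gaussV3 hβ2
    have := h1.add h2
    refine this.congr (ae_of_all _ fun v => ?_)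
    simp only [Pi.add_apply, hqdef]
    ring
  have hq2 : Integrable (fun p : sphere (0:V3) 1 × V3 => (1:ℝ) * q p.2)
      (sphereMeasure.prod volume) := (integrable_const (1:ℝ)).mul_prod hq
  have hh : Integrable h (sphereMeasure.prod volume) := hq2.const_mul C
  have hbound : ∀ p, ‖f p‖ ≤ h p := by
    intro p
    by_cases hc : 0 ≤ ⟪(p.1:V3), vk - p.2⟫
    · simp only [hf, if_pos hc]
      rw [Real.norm_eq_abs, abs_mul]
      have h1 : |⟪(p.1:V3), vk - p.2⟫| ≤ ‖vk‖ + ‖p.2‖ := by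
        calc |⟪(p.1:V3), vk - p.2⟫| ≤ ‖(p.1:V3)‖ * ‖vk - p.2‖ := abs_real_inner_le_norm _ _
          _ = ‖vk - p.2‖ := by rw [norm_eq_of_mem_sphere, one_mul]
          _ ≤ ‖vk‖ + ‖p.2‖ := norm_sub_le _ _
      have h2 : |g (T p)| ≤ M' * P * (Real.exp (-(β * Sz)) * Real.exp (-(β/2 * ‖p.2‖^2))) := by
        have hgt := hg (T p)
        rw [hTsum p] at hgt
        rw [← Real.exp_add]
        calc |g (T p)| ≤ M' * P * Real.exp (-(β * (Sz + ‖p.2‖^2/2))) := hgt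
          _ = M' * P * Real.exp (-(β*Sz) + -(β/2 * ‖p.2‖^2)) := by ring_nf
      calc |⟪(p.1:V3), vk - p.2⟫| * |g (T p)|
          ≤ (‖vk‖ + ‖p.2‖) * (M' * P * (Real.exp (-(β * Sz)) * Real.exp (-(β/2 * ‖p.2‖^2)))) :=
            mul_le_mul h1 h2 (abs_nonneg _)
              (by positivity)
        _ = h p := by simp only [hhdef, hqdef]; ring
    · simp only [hf, if_neg hc, norm_zero]
      simp only [hhdef, hqdef]
      positivity
  have hint : Integrable f (sphereMeasure.prod volume) :=
    hh.mono' hmf.aestronglyMeasurable (ae_of_all _ hbound)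
  refine ⟨hint, ?_⟩
  have step1 : |∫ p, f p ∂(sphereMeasure.prod volume)|
      ≤ ∫ p, h p ∂(sphereMeasure.prod volume) := by
    calc |∫ p, f p ∂(sphereMeasure.prod volume)|
        = ‖∫ p, f p ∂(sphereMeasure.prod volume)‖ := (Real.norm_eq_abs _).symm
      _ ≤ ∫ p, ‖f p‖ ∂(sphereMeasure.prod volume) := norm_integral_le_integral_norm _
      _ ≤ ∫ p, h p ∂(sphereMeasure.prod volume) := integral_mono hint.norm hh hbound
  have step2 : ∫ p, h p ∂(sphereMeasure.prod volume) = C * (SmC * (‖vk‖ * I0c β + I1c β)) := by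
    simp only [hhdef]
    rw [integral_const_mul]
    have := integral_prod_mul (μ := sphereMeasure) (ν := volume)
      (fun _ : sphere (0:V3) 1 => (1:ℝ)) q
    rw [this]
    have hsm : (∫ _x : sphere (0:V3) 1, (1:ℝ) ∂sphereMeasure) = SmC := by
      simp [integral_const, SmC, measureReal_def]
    have hqint : ∫ v, q v = ‖vk‖ * I0c β + I1c β := by
        have h1 := (integrable_gaussV3 hβ2).const_mul ‖vk‖
        have h2 := integrable_norm_gaussV3 hβ2
        have heq : ∀ v : V3, q v = ‖vk‖ * Real.exp (-(β/2 * ‖v‖^2))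
            + ‖v‖ * Real.exp (-(β/2 * ‖v‖^2)) := by intro v; simp only [hqdef]; ring
        simp_rw [heq]
        rw [integral_add h1 h2, integral_const_mul]
        rfl
    rw [hsm, hqint]
  exact step1.trans_eq step2

lemma sum_snoc' (j : ℕ) (z : Phase j) (b : V3 × V3) :
    ∑ i : Fin (j+1), ‖((Fin.snoc z b : Phase (j+1)) i).2‖^2/2
      = (∑ i, ‖(z i).2‖^2/2) + ‖b.2‖^2/2 :=
  sum_snoc j z b (fun pr => ‖pr.2‖^2/2)

lemma sum_update' (j : ℕ) (z : Phase j) (k : Fin j) (a : V3 × V3) :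
    ∑ i, ‖((Function.update z k a : Phase j) i).2‖^2/2
      = (∑ i, ‖(z i).2‖^2/2) - ‖(z k).2‖^2/2 + ‖a.2‖^2/2 :=
  sum_update j z k a (fun pr => ‖pr.2‖^2/2)



/-- The gain part `C⁺_{k,j+1}` of the Boltzmann hierarchy collision operator. -/
def collGain (j : ℕ) (k : Fin j) (g : Phase (j + 1) → ℝ) (z : Phase j) : ℝ :=
  ∫ ω : sphere (0 : V3) 1, ∫ v : V3,
    (if 0 ≤ ⟪(ω : V3), (z k).2 - v⟫ then
      ⟪(ω : V3), (z k).2 - v⟫ *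
        g (Fin.snoc
            (Function.update z k
              ((z k).1, (z k).2 - ⟪(z k).2 - v, (ω : V3)⟫ • (ω : V3)))
            ((z k).1, v + ⟪(z k).2 - v, (ω : V3)⟫ • (ω : V3)))
    else 0) ∂volume ∂sphereMeasure

/-- The loss part `C⁻_{k,j+1}` of the Boltzmann hierarchy collision operator. -/
def collLoss (j : ℕ) (k : Fin j) (g : Phase (j + 1) → ℝ) (z : Phase j) : ℝ :=
  ∫ ω : sphere (0 : V3) 1, ∫ v : V3,
    (if 0 ≤ ⟪(ω : V3), (z k).2 - v⟫ then
      ⟪(ω : V3), (z k).2 - v⟫ * g (Fin.snoc z ((z k).1, v))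
    else 0) ∂volume ∂sphereMeasure

/-- The Boltzmann hierarchy collision operator `C_{j+1} = Σ_k (C⁺_{k,j+1} − C⁻_{k,j+1})`. -/
def collB (j : ℕ) (g : Phase (j + 1) → ℝ) : Phase j → ℝ :=
  fun z => ∑ k : Fin j, (collGain j k g z - collLoss j k g z)

/-- Weighted-norm bound for the Boltzmann hierarchy collision operator: there is a
constant `c_β > 0`, depending only on `β`, such that for every `0 < β' < β`, `j ≥ 1`
and `g` with `‖g‖_{j+1,β} < ∞`, `C_{j+1} g` is well defined and
`‖C_{j+1} g‖_{j,β'} ≤ c_β (β/β')^{3j/2} [√j/√(β−β') + j] ‖g‖_{j+1,β}`. -/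
theorem collB_bound (β : ℝ) (hβ : 0 < β) :
    ∃ c : ℝ, 0 < c ∧
      ∀ (β' : ℝ), 0 < β' → β' < β →
        ∀ (j : ℕ), 1 ≤ j →
          ∀ (g : Phase (j + 1) → ℝ), Measurable g → wnorm β (j + 1) g < ⊤ →
            (∀ (z : Phase j) (k : Fin j),
              Integrable
                (fun p : sphere (0 : V3) 1 × V3 =>
                  if 0 ≤ ⟪(p.1 : V3), (z k).2 - p.2⟫ then
                    ⟪(p.1 : V3), (z k).2 - p.2⟫ *
                      g (Fin.snoc
                          (Function.update z k
                            ((z k).1, (z k).2 - ⟪(z k).2 - p.2, (p.1 : V3)⟫ • (p.1 : V3)))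
                          ((z k).1, p.2 + ⟪(z k).2 - p.2, (p.1 : V3)⟫ • (p.1 : V3)))
                  else 0)
                (sphereMeasure.prod volume) ∧
              Integrable
                (fun p : sphere (0 : V3) 1 × V3 =>
                  if 0 ≤ ⟪(p.1 : V3), (z k).2 - p.2⟫ then
                    ⟪(p.1 : V3), (z k).2 - p.2⟫ * g (Fin.snoc z ((z k).1, p.2))
                  else 0)
                (sphereMeasure.prod volume)) ∧
            wnorm β' j (collB j g) ≤
              ENNReal.ofReal (c * (β / β') ^ (3 * (j : ℝ) / 2) *
                  (Real.sqrt j / Real.sqrt (β - β') + j)) *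
                wnorm β (j + 1) g := by
  
  classical
  have h2π : (0:ℝ) < 2 * π := by positivity
  have hI0 : 0 ≤ I0c β := integral_nonneg fun v => (Real.exp_pos _).le
  have hI1 : 0 ≤ I1c β := integral_nonneg fun v => by positivity
  have hSm : 0 ≤ SmC := ENNReal.toReal_nonneg
  set X32 : ℝ := (β / (2*π)) ^ ((3:ℝ)/2) with hX32def
  have hX32pos : 0 < X32 := Real.rpow_pos_of_pos (by positivity) _
  clear_value X32
  refine ⟨2 * X32 * SmC * (I0c β + I1c β) + 1, by positivity, ?_⟩
  intro β' hβ'pos hβ'lt j hj g hgm hM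
  set lam : ℝ := β - β' with hlamdef
  have hlam : 0 < lam := by simp [hlamdef]; linarith
  clear_value lam
  set M' := (wnorm β (j+1) g).toReal with hM'def
  have hM'0 : 0 ≤ M' := ENNReal.toReal_nonneg
  have hMeq : wnorm β (j+1) g = ENNReal.ofReal M' := (ENNReal.ofReal_toReal hM.ne).symm
  clear_value M'
  set D : ℝ := (β / (2 * π)) ^ (-(3 * ((j+1 : ℕ) : ℝ) / 2)) with hDdef
  have hDpos : 0 < D := Real.rpow_pos_of_pos (by positivity) _
  set P : ℝ := D⁻¹ with hPdef
  have hPpos : 0 < P := by positivity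
  -- pointwise bound on g
  have hgb : ∀ w : Phase (j+1), |g w| ≤ M' * P * Real.exp (-(β * ∑ i, ‖(w i).2‖^2/2)) := by
    intro w
    have h1 : ENNReal.ofReal (|g w| * D * Real.exp (β * ∑ i, ‖(w i).2‖^2/2))
        ≤ wnorm β (j+1) g := by
      rw [wnorm]
      exact le_iSup (fun w : Phase (j+1) => ENNReal.ofReal
        (|g w| * (β / (2 * π)) ^ (-(3 * ((j+1 : ℕ) : ℝ) / 2)) *
          Real.exp (β * ∑ i, ‖(w i).2‖ ^ 2 / 2))) w
    rw [hMeq] at h1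
    have h2 : |g w| * D * Real.exp (β * ∑ i, ‖(w i).2‖^2/2) ≤ M' :=
      (ENNReal.ofReal_le_ofReal_iff hM'0).mp h1
    have hE : (0:ℝ) < Real.exp (β * ∑ i, ‖(w i).2‖^2/2) := Real.exp_pos _
    rw [Real.exp_neg]
    calc |g w| = |g w| * D * Real.exp (β * ∑ i, ‖(w i).2‖^2/2)
          * P * (Real.exp (β * ∑ i, ‖(w i).2‖^2/2))⁻¹ := by
            rw [hPdef]; field_simp
      _ ≤ M' * P * (Real.exp (β * ∑ i, ‖(w i).2‖^2/2))⁻¹ := by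
            apply mul_le_mul_of_nonneg_right _ (by positivity)
            exact mul_le_mul_of_nonneg_right h2 hPpos.le
  -- per z,k data
  have main : ∀ (z : Phase j) (k : Fin j),
      (Integrable
          (fun p : sphere (0 : V3) 1 × V3 =>
            if 0 ≤ ⟪(p.1 : V3), (z k).2 - p.2⟫ then
              ⟪(p.1 : V3), (z k).2 - p.2⟫ *
                g (Fin.snoc
                    (Function.update z k
                      ((z k).1, (z k).2 - ⟪(z k).2 - p.2, (p.1 : V3)⟫ • (p.1 : V3)))
                    ((z k).1, p.2 + ⟪(z k).2 - p.2, (p.1 : V3)⟫ • (p.1 : V3)))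
            else 0)
          (sphereMeasure.prod volume) ∧
        Integrable
          (fun p : sphere (0 : V3) 1 × V3 =>
            if 0 ≤ ⟪(p.1 : V3), (z k).2 - p.2⟫ then
              ⟪(p.1 : V3), (z k).2 - p.2⟫ * g (Fin.snoc z ((z k).1, p.2))
            else 0)
          (sphereMeasure.prod volume)) ∧
      |collGain j k g z| ≤ M' * P * Real.exp (-(β * ∑ i, ‖(z i).2‖^2/2))
          * (SmC * (‖(z k).2‖ * I0c β + I1c β)) ∧
      |collLoss j k g z| ≤ M' * P * Real.exp (-(β * ∑ i, ‖(z i).2‖^2/2))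
          * (SmC * (‖(z k).2‖ * I0c β + I1c β)) := by
    intro z k
    set Sz : ℝ := ∑ i, ‖(z i).2‖^2/2 with hSzdef
    set Tg : sphere (0:V3) 1 × V3 → Phase (j+1) := fun p =>
      Fin.snoc
        (Function.update z k
          ((z k).1, (z k).2 - ⟪(z k).2 - p.2, (p.1 : V3)⟫ • (p.1 : V3)))
        ((z k).1, p.2 + ⟪(z k).2 - p.2, (p.1 : V3)⟫ • (p.1 : V3)) with hTgdef
    set Tl : sphere (0:V3) 1 × V3 → Phase (j+1) := fun p =>
      Fin.snoc z ((z k).1, p.2) with hTldef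
    have hcont1 : Continuous (fun p : sphere (0:V3) 1 × V3 =>
        (((z k).1, (z k).2 - ⟪(z k).2 - p.2, (p.1 : V3)⟫ • (p.1 : V3)) : V3 × V3)) := by
      refine continuous_const.prodMk (continuous_const.sub (Continuous.fun_smul ?_ ?_))
      · exact Continuous.inner (continuous_const.sub continuous_snd)
          (continuous_subtype_val.comp continuous_fst)
      · exact continuous_subtype_val.comp continuous_fst
    have hcont2 : Continuous (fun p : sphere (0:V3) 1 × V3 =>
        (((z k).1, p.2 + ⟪(z k).2 - p.2, (p.1 : V3)⟫ • (p.1 : V3)) : V3 × V3)) := by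
      refine continuous_const.prodMk (Continuous.add continuous_snd (Continuous.fun_smul ?_ ?_))
      · exact Continuous.inner (continuous_const.sub continuous_snd)
          (continuous_subtype_val.comp continuous_fst)
      · exact continuous_subtype_val.comp continuous_fst
    have hTgm : Measurable Tg :=
      measurable_snocFun (measurable_updateFun z k hcont1.measurable) hcont2.measurable
    have hTlm : Measurable Tl :=
      measurable_snocFun measurable_const (measurable_const.prodMk measurable_snd)
    have hTgsum : ∀ p : sphere (0:V3) 1 × V3,
        (∑ i, ‖(Tg p i).2‖^2/2) = Sz + ‖p.2‖^2/2 := by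
      intro p
      have hω : ‖(p.1 : V3)‖ = 1 := norm_eq_of_mem_sphere p.1
      have hen := energy_id ((z k).2) p.2 (p.1 : V3) hω
      simp only [hTgdef]
      rw [sum_snoc', sum_update']
      simp only [hSzdef]
      nlinarith [hen]
    have hTlsum : ∀ p : sphere (0:V3) 1 × V3,
        (∑ i, ‖(Tl p i).2‖^2/2) = Sz + ‖p.2‖^2/2 := by
      intro p
      simp only [hTldef]
      rw [sum_snoc']
    have hkg := key j β M' P Sz hβ hM'0 hPpos.le g hgm hgb ((z k).2) Tg hTgm hTgsum
    have hkl := key j β M' P Sz hβ hM'0 hPpos.le g hgm hgb ((z k).2) Tl hTlm hTlsum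
    refine ⟨⟨hkg.1, hkl.1⟩, ?_, ?_⟩
    · have heq : collGain j k g z
          = ∫ p : sphere (0:V3) 1 × V3,
              (if 0 ≤ ⟪(p.1:V3), (z k).2 - p.2⟫ then
                ⟪(p.1:V3), (z k).2 - p.2⟫ * g (Tg p) else 0)
              ∂(sphereMeasure.prod volume) := by
        rw [collGain]
        exact integral_integral hkg.1
      rw [heq]
      exact hkg.2
    · have heq : collLoss j k g z
          = ∫ p : sphere (0:V3) 1 × V3,
              (if 0 ≤ ⟪(p.1:V3), (z k).2 - p.2⟫ then
                ⟪(p.1:V3), (z k).2 - p.2⟫ * g (Tl p) else 0)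
              ∂(sphereMeasure.prod volume) := by
        rw [collLoss]
        exact integral_integral hkl.1
      rw [heq]
      exact hkl.2
  refine ⟨fun z k => (main z k).1, ?_⟩
  -- the norm bound
  rw [hMeq, ← ENNReal.ofReal_mul (by positivity)]
  rw [wnorm]
  refine iSup_le fun z => ENNReal.ofReal_le_ofReal ?_
  set D' : ℝ := (β' / (2 * π)) ^ (-(3 * (j : ℝ) / 2)) with hD'def
  have hD'pos : 0 < D' := Real.rpow_pos_of_pos (by positivity) _
  set R : ℝ := (β / β') ^ (3 * (j : ℝ) / 2) with hRdef
  have hR0 : 0 ≤ R := (Real.rpow_pos_of_pos (by positivity) _).le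
  have hPD' : P * D' = X32 * R := by
    have hX : (0:ℝ) < β / (2*π) := by positivity
    have hY : (0:ℝ) < β' / (2*π) := by positivity
    have hP' : P = (β / (2*π)) ^ (3 * ((j+1 : ℕ) : ℝ) / 2) := by
      rw [hPdef, hDdef, Real.rpow_neg hX.le, inv_inv]
    have hsplit : (β / (2*π)) ^ (3 * ((j+1 : ℕ) : ℝ) / 2)
        = (β / (2*π)) ^ (3 * (j:ℝ)/2) * (β / (2*π)) ^ ((3:ℝ)/2) := by
      rw [← Real.rpow_add hX]
      congr 1
      push_cast
      ring
    have hD' : D' = ((β' / (2*π)) ^ (3 * (j:ℝ)/2))⁻¹ := by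
      rw [hD'def, Real.rpow_neg hY.le]
    have hXY : (β / (2*π)) / (β' / (2*π)) = β / β' := by
      exact div_div_div_cancel_right₀ (by positivity : (0:ℝ) < 2*π).ne' _ _
    have hratio : (β / (2*π)) ^ (3 * (j:ℝ)/2) * ((β' / (2*π)) ^ (3 * (j:ℝ)/2))⁻¹ = R := by
      rw [hRdef, ← hXY, Real.div_rpow hX.le hY.le]
      exact (div_eq_mul_inv _ _).symm
    rw [hP', hsplit, hD']
    rw [mul_comm ((β / (2*π)) ^ (3 * (j:ℝ)/2)) ((β / (2*π)) ^ ((3:ℝ)/2)), mul_assoc, hratio,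
      hX32def]
  set Sz : ℝ := ∑ i, ‖(z i).2‖^2/2 with hSzdef
  have hSz0 : 0 ≤ Sz := Finset.sum_nonneg fun i _ => by positivity
  set N : ℝ := ∑ k : Fin j, ‖(z k).2‖ with hNdef
  have hN0 : 0 ≤ N := Finset.sum_nonneg fun i _ => norm_nonneg _
  set S2 : ℝ := ∑ k : Fin j, ‖(z k).2‖^2 with hS2def
  have hS20 : 0 ≤ S2 := Finset.sum_nonneg fun i _ => by positivity
  have hSzS2 : Sz = S2/2 := by rw [hSzdef, hS2def, Finset.sum_div]
  clear_value Sz N S2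
  set Kz : ℝ := M' * P * Real.exp (-(β * Sz)) with hKzdef
  have hKz0 : 0 ≤ Kz := by positivity
  clear_value Kz
  -- step 1 : bound collB
  have hb1 : |collB j g z| ≤ 2*Kz*SmC*(I0c β * N + I1c β * (j:ℝ)) := by
    have h1 : |collB j g z| ≤ ∑ k : Fin j, 2*(Kz*(SmC*(‖(z k).2‖ * I0c β + I1c β))) := by
      simp only [collB]
      refine (Finset.abs_sum_le_sum_abs _ _).trans (Finset.sum_le_sum fun k _ => ?_)
      have h2 := (main z k).2.1
      have h3 := (main z k).2.2
      calc |collGain j k g z - collLoss j k g z|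
          ≤ |collGain j k g z| + |collLoss j k g z| := abs_sub _ _
        _ ≤ 2*(Kz*(SmC*(‖(z k).2‖ * I0c β + I1c β))) := by
            rw [hKzdef]
            simp only [hSzdef]
            linarith [h2, h3]
    refine h1.trans_eq ?_
    calc ∑ k : Fin j, 2*(Kz*(SmC*(‖(z k).2‖ * I0c β + I1c β)))
        = ∑ k : Fin j, (2*Kz*SmC*I0c β*‖(z k).2‖ + 2*Kz*SmC*I1c β) :=
          Finset.sum_congr rfl fun k _ => by ring
      _ = 2*Kz*SmC*I0c β * N + (j:ℝ)*(2*Kz*SmC*I1c β) := by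
          rw [Finset.sum_add_distrib, ← Finset.mul_sum, Finset.sum_const,
            Finset.card_univ, Fintype.card_fin, nsmul_eq_mul, hNdef]
      _ = 2*Kz*SmC*(I0c β * N + I1c β * (j:ℝ)) := by ring
  -- step 2 : Cauchy-Schwarz and Gaussian sup bounds
  have hCS : N ≤ Real.sqrt (j:ℝ) * Real.sqrt S2 := by
    have h := sq_sum_le_card_mul_sum_sq (s := (Finset.univ : Finset (Fin j)))
      (f := fun k => ‖(z k).2‖)
    rw [Finset.card_univ, Fintype.card_fin] at h
    calc N = Real.sqrt (N^2) := (Real.sqrt_sq hN0).symm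
      _ ≤ Real.sqrt ((j:ℝ) * S2) := Real.sqrt_le_sqrt (by rw [hNdef, hS2def]; exact_mod_cast h)
      _ = Real.sqrt (j:ℝ) * Real.sqrt S2 := Real.sqrt_mul (by positivity) _
  have hsupS : Real.sqrt S2 * Real.exp (-(lam * Sz)) ≤ (Real.sqrt lam)⁻¹ := by
    have hls : 0 ≤ lam * S2 := mul_nonneg hlam.le hS20
    have h1 : Real.sqrt lam * Real.sqrt S2 ≤ Real.exp (lam * Sz) := by
      have h2 := self_le_exp_half_sq (Real.sqrt (lam * S2))
      rw [Real.sq_sqrt hls] at h2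
      calc Real.sqrt lam * Real.sqrt S2 = Real.sqrt (lam * S2) :=
            (Real.sqrt_mul hlam.le _).symm
        _ ≤ Real.exp (lam * S2 / 2) := h2
        _ = Real.exp (lam * Sz) := by rw [hSzS2]; ring_nf
    have hsl : 0 < Real.sqrt lam := Real.sqrt_pos.2 hlam
    have hEp : (0:ℝ) < Real.exp (lam * Sz) := Real.exp_pos _
    rw [Real.exp_neg]
    nlinarith [mul_inv_cancel₀ hsl.ne', mul_inv_cancel₀ hEp.ne',
      Real.sqrt_nonneg S2, mul_pos hsl hEp]
  have hexple : Real.exp (-(lam * Sz)) ≤ 1 :=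
    Real.exp_le_one_iff.mpr (by nlinarith)
  have hb2 : (I0c β * N + I1c β * (j:ℝ)) * Real.exp (-(lam * Sz))
      ≤ I0c β * (Real.sqrt (j:ℝ) * (Real.sqrt lam)⁻¹) + I1c β * (j:ℝ) := by
    have hEn : 0 ≤ Real.exp (-(lam * Sz)) := (Real.exp_pos _).le
    have t1 : I0c β * N * Real.exp (-(lam * Sz))
        ≤ I0c β * (Real.sqrt (j:ℝ) * (Real.sqrt lam)⁻¹) := by
      calc I0c β * N * Real.exp (-(lam * Sz))
          ≤ I0c β * (Real.sqrt (j:ℝ) * Real.sqrt S2) * Real.exp (-(lam * Sz)) := by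
            apply mul_le_mul_of_nonneg_right _ hEn
            exact mul_le_mul_of_nonneg_left hCS hI0
        _ = I0c β * Real.sqrt (j:ℝ) * (Real.sqrt S2 * Real.exp (-(lam * Sz))) := by ring
        _ ≤ I0c β * Real.sqrt (j:ℝ) * (Real.sqrt lam)⁻¹ := by
            apply mul_le_mul_of_nonneg_left hsupS
            positivity
        _ = I0c β * (Real.sqrt (j:ℝ) * (Real.sqrt lam)⁻¹) := by ring
    have t2 : I1c β * (j:ℝ) * Real.exp (-(lam * Sz)) ≤ I1c β * (j:ℝ) := by
      calc I1c β * (j:ℝ) * Real.exp (-(lam * Sz)) ≤ I1c β * (j:ℝ) * 1 := by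
            apply mul_le_mul_of_nonneg_left hexple
            positivity
        _ = I1c β * (j:ℝ) := by ring
    calc (I0c β * N + I1c β * (j:ℝ)) * Real.exp (-(lam * Sz))
        = I0c β * N * Real.exp (-(lam * Sz)) + I1c β * (j:ℝ) * Real.exp (-(lam * Sz)) := by
          ring
      _ ≤ _ := add_le_add t1 t2
  -- assemble
  have hee : Real.exp (-(β * Sz)) * Real.exp (β' * Sz) = Real.exp (-(lam * Sz)) := by
    rw [← Real.exp_add]
    congr 1
    rw [hlamdef]
    ring
  have hcore : 2*SmC*X32*(I0c β * (Real.sqrt (j:ℝ) * (Real.sqrt lam)⁻¹) + I1c β * (j:ℝ))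
      ≤ (2 * X32 * SmC * (I0c β + I1c β) + 1)
        * (Real.sqrt (j:ℝ) * (Real.sqrt lam)⁻¹ + (j:ℝ)) := by
    have hA : 0 ≤ Real.sqrt (j:ℝ) * (Real.sqrt lam)⁻¹ := by positivity
    have hB : (0:ℝ) ≤ (j:ℝ) := Nat.cast_nonneg _
    nlinarith [mul_nonneg (mul_nonneg (mul_nonneg hSm hX32pos.le) hI0) hB,
      mul_nonneg (mul_nonneg (mul_nonneg hSm hX32pos.le) hI1) hA,
      mul_nonneg hA hB]
  calc |collB j g z| * D' * Real.exp (β' * Sz)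
      ≤ (2*Kz*SmC*(I0c β * N + I1c β * (j:ℝ))) * D' * Real.exp (β' * Sz) := by
        apply mul_le_mul_of_nonneg_right _ (Real.exp_pos _).le
        exact mul_le_mul_of_nonneg_right hb1 hD'pos.le
    _ = 2 * M' * SmC * (P * D')
        * ((I0c β * N + I1c β * (j:ℝ)) * (Real.exp (-(β * Sz)) * Real.exp (β' * Sz))) := by
        rw [hKzdef]; ring
    _ = 2 * M' * SmC * (X32 * R)
        * ((I0c β * N + I1c β * (j:ℝ)) * Real.exp (-(lam * Sz))) := by
        rw [hPD', hee]
    _ ≤ 2 * M' * SmC * (X32 * R)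
        * (I0c β * (Real.sqrt (j:ℝ) * (Real.sqrt lam)⁻¹) + I1c β * (j:ℝ)) := by
        apply mul_le_mul_of_nonneg_left hb2
        positivity
    _ = (2*SmC*X32*(I0c β * (Real.sqrt (j:ℝ) * (Real.sqrt lam)⁻¹) + I1c β * (j:ℝ)))
        * (R * M') := by ring
    _ ≤ ((2 * X32 * SmC * (I0c β + I1c β) + 1)
        * (Real.sqrt (j:ℝ) * (Real.sqrt lam)⁻¹ + (j:ℝ))) * (R * M') :=
        mul_le_mul_of_nonneg_right hcore (mul_nonneg hR0 hM'0)
    _ = (2 * X32 * SmC * (I0c β + I1c β) + 1) * R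
        * (Real.sqrt (j:ℝ) / Real.sqrt lam + (j:ℝ)) * M' := by
        rw [div_eq_mul_inv]
        ring
end
end

section
/- Volume bound for connected cluster configurations (negligibility of multiple collisions): Let ε > 0, let m ≥ 1 be an integer and fix x₀ ∈ ℝ³. Let Δ_m(x₀, ε) ⊂ (ℝ³)^m be the set of (y₁,…,y_m) such that the graph on vertex set {0,1,…,m} (with y₀ := x₀) having an edge between k and l if and only if |y_k − y_l| ≤ ε is connected. Then the Lebesgue measure of Δ_m(x₀,ε) in ℝ^{3m} is at most (m+1)^{m−1} (4π/3)^m ε^{3m}; in particular |Δ_m(x₀,ε)| = O(ε^{3m}) as ε → 0 for fixed m. -/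
open MeasureTheory Real
open scoped ENNReal

noncomputable section

/-- The set `Δ_m(x₀, ε)` of configurations `(y₁,…,y_m)` such that the graph on the
vertices `{0,1,…,m}` (with `y₀ := x₀`), having an edge between `k` and `l` iff
`|y_k − y_l| ≤ ε`, is connected. -/
def clusterSet (m : ℕ) (x₀ : V3) (ε : ℝ) : Set (Fin m → V3) :=
  {y | ∀ a b : Fin (m + 1),
    Relation.ReflTransGen
      (fun k l : Fin (m + 1) =>
        ‖(Fin.cons x₀ y : Fin (m + 1) → V3) k - (Fin.cons x₀ y : Fin (m + 1) → V3) l‖ ≤ ε)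
      a b}

set_option linter.unusedSectionVars false

section Combinatorics

variable {m : ℕ}

def stepFn (p : Fin m → Fin (m + 1)) : Fin (m + 1) → Fin (m + 1) := Fin.cons 0 p

def Acyclic (p : Fin m → Fin (m + 1)) : Prop := ∀ v, ∃ n, (stepFn p)^[n] v = 0

section Prufer

variable (q : Fin (m + 1) → Fin (m + 1))

def Closed (s : Finset (Fin (m + 1))) : Prop := ∀ v ∈ s, v ≠ 0 → q v ∈ s

def leaves (s : Finset (Fin (m + 1))) : Finset (Fin (m + 1)) :=
  (s.erase 0).filter fun v => ∀ w ∈ s.erase 0, q w ≠ v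

lemma min'_leaves_mem {s : Finset (Fin (m + 1))} (h : (leaves q s).Nonempty) :
    (leaves q s).min' h ∈ s.erase 0 :=
  (Finset.mem_filter.mp ((leaves q s).min'_mem h)).1

def code (s : Finset (Fin (m + 1))) : List (Fin (m + 1)) :=
  if h : (leaves q s).Nonempty then
    q ((leaves q s).min' h) :: code (s.erase ((leaves q s).min' h))
  else []
termination_by s.card
decreasing_by
  exact Finset.card_erase_lt_of_mem (Finset.mem_of_mem_erase (min'_leaves_mem q h))

variable {q}
variable (h0 : q 0 = 0) (hac : ∀ v, ∃ n, q^[n] v = 0)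
include h0 hac

lemma iter_zero (n : ℕ) : q^[n] 0 = 0 := by
  induction n with
  | zero => rfl
  | succ n ih => rw [Function.iterate_succ_apply', ih, h0]

lemma iter_stable {v : Fin (m + 1)} {a b : ℕ} (h : q^[a] v = 0) (hab : a ≤ b) :
    q^[b] v = 0 := by
  have hb : b = (b - a) + a := by omega
  rw [hb, Function.iterate_add_apply, h, iter_zero h0 hac]

noncomputable def depth (hac : ∀ v : Fin (m+1), ∃ n, q^[n] v = 0) (v : Fin (m + 1)) : ℕ :=
  Nat.find (hac v)

lemma depth_pos {v : Fin (m + 1)} (hv : v ≠ 0) : 0 < depth hac v := by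
  rcases Nat.eq_zero_or_pos (depth hac v) with h | h
  · have h2 : q^[depth hac v] v = 0 := Nat.find_spec (hac v)
    rw [h] at h2
    exact absurd h2 hv
  · exact h

lemma depth_q_lt {v : Fin (m + 1)} (hv : v ≠ 0) : depth hac (q v) < depth hac v := by
  have h1 : 0 < depth hac v := depth_pos h0 hac hv
  have h2 : q^[depth hac v] v = 0 := Nat.find_spec (hac v)
  have h3 : q^[depth hac v - 1] (q v) = 0 := by
    rw [← Function.iterate_succ_apply, Nat.succ_eq_add_one, Nat.sub_add_cancel h1]
    exact h2
  exact lt_of_le_of_lt (Nat.find_le h3) (by omega)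

lemma leaves_nonempty {s : Finset (Fin (m + 1))} (hs : (s.erase 0).Nonempty) :
    (leaves q s).Nonempty := by
  obtain ⟨v, hv, hmax⟩ := (s.erase 0).exists_max_image (depth hac) hs
  refine ⟨v, Finset.mem_filter.mpr ⟨hv, fun w hw hqw => ?_⟩⟩
  have hwne : w ≠ 0 := Finset.ne_of_mem_erase hw
  have := depth_q_lt h0 hac hwne
  rw [hqw] at this
  exact absurd (hmax w hw) (by omega)

omit h0 hac in
lemma closed_erase {s : Finset (Fin (m + 1))} (hcl : Closed q s)
    {v : Fin (m + 1)} (hv : v ∈ leaves q s) : Closed q (s.erase v) := by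
  intro w hw hw0
  rcases Finset.mem_filter.mp hv with ⟨hv1, hv2⟩
  refine Finset.mem_erase.mpr ⟨?_, hcl w (Finset.mem_of_mem_erase hw) hw0⟩
  exact hv2 w (Finset.mem_erase.mpr ⟨hw0, Finset.mem_of_mem_erase hw⟩)

lemma code_perm : ∀ (n : ℕ) (s : Finset (Fin (m + 1))), s.card ≤ n → 0 ∈ s → Closed q s →
    (code q s : Multiset (Fin (m + 1))) = Multiset.map q (s.erase 0).val := by
  intro n
  induction n with
  | zero => intro s hcard h0s _; exact absurd (Finset.card_pos.mpr ⟨0, h0s⟩) (by omega)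
  | succ n ih =>
    intro s hcard h0s hcl
    rw [code]
    split_ifs with h
    · set v := (leaves q s).min' h with hv
      have hvl : v ∈ leaves q s := (leaves q s).min'_mem h
      have hve : v ∈ s.erase 0 := min'_leaves_mem q h
      have hvne : v ≠ 0 := Finset.ne_of_mem_erase hve
      have hvs : v ∈ s := Finset.mem_of_mem_erase hve
      have h0e : (0 : Fin (m+1)) ∈ s.erase v := Finset.mem_erase.mpr ⟨Ne.symm hvne, h0s⟩
      have hrec := ih (s.erase v) (by
          have := Finset.card_erase_of_mem hvs
          omega) h0e (closed_erase hcl hvl)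
      show (q v) ::ₘ (code q (s.erase v) : Multiset _) = _
      rw [hrec, Finset.erase_right_comm]
      have hval : (s.erase 0).val = v ::ₘ ((s.erase 0).erase v).val := by
        rw [Finset.erase_val]
        exact (Multiset.cons_erase hve).symm
      rw [hval, Multiset.map_cons]
    · have : s.erase 0 = ∅ := by
        by_contra hne
        exact h (leaves_nonempty h0 hac (Finset.nonempty_of_ne_empty hne))
      simp [this]

lemma leaves_eq_filter {s : Finset (Fin (m + 1))} (h0s : 0 ∈ s) (hcl : Closed q s) :
    leaves q s = (s.erase 0).filter (fun v => v ∉ code q s) := by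
  ext v
  simp only [leaves, Finset.mem_filter]
  refine and_congr_right fun hv => ?_
  have hmem : v ∈ code q s ↔ ∃ w ∈ s.erase 0, q w = v := by
    rw [← Multiset.mem_coe, code_perm h0 hac s.card s le_rfl h0s hcl]
    simp only [Multiset.mem_map, Finset.mem_val]
  constructor
  · intro hall
    rw [hmem]
    push_neg
    exact hall
  · intro hnc w hw
    rw [hmem] at hnc
    push_neg at hnc
    exact hnc w hw

lemma code_inj {q' : Fin (m + 1) → Fin (m + 1)} (h0' : q' 0 = 0)
    (hac' : ∀ v, ∃ n, q'^[n] v = 0) :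
    ∀ (n : ℕ) (s : Finset (Fin (m + 1))), s.card ≤ n → 0 ∈ s → Closed q s → Closed q' s →
      code q s = code q' s → ∀ v ∈ s, v ≠ 0 → q v = q' v := by
  intro n
  induction n with
  | zero => intro s hcard h0s _ _ _ v hv _; exact absurd (Finset.card_pos.mpr ⟨v, hv⟩) (by omega)
  | succ n ih =>
    intro s hcard h0s hcl hcl' hcode v hv hv0
    have hle : leaves q s = leaves q' s := by
      rw [leaves_eq_filter h0 hac h0s hcl, leaves_eq_filter h0' hac' h0s hcl', hcode]
    by_cases h : (leaves q s).Nonempty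
    · have h' : (leaves q' s).Nonempty := hle ▸ h
      set w := (leaves q s).min' h with hw
      have hww : (leaves q' s).min' h' = w := by
        rw [hw]
        congr 1
        exact hle.symm
      have hc1 : code q s = q w :: code q (s.erase w) := by rw [code, dif_pos h]
      have hc2 : code q' s = q' w :: code q' (s.erase w) := by rw [code, dif_pos h', hww]
      rw [hc1, hc2] at hcode
      have hhead : q w = q' w := ((List.cons.injEq _ _ _ _).mp hcode).1
      have htail := ((List.cons.injEq _ _ _ _).mp hcode).2
      have hwl : w ∈ leaves q s := (leaves q s).min'_mem h
      have hwl' : w ∈ leaves q' s := hle ▸ hwl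
      have hwe : w ∈ s.erase 0 := min'_leaves_mem q h
      have hws : w ∈ s := Finset.mem_of_mem_erase hwe
      by_cases hvw : v = w
      · rw [hvw]; exact hhead
      · exact ih (s.erase w) (by have := Finset.card_erase_of_mem hws; omega)
          (Finset.mem_erase.mpr ⟨Ne.symm (Finset.ne_of_mem_erase hwe), h0s⟩)
          (closed_erase hcl hwl) (closed_erase hcl' hwl') htail
          v (Finset.mem_erase.mpr ⟨hvw, hv⟩) hv0
    · exact absurd (leaves_nonempty h0 hac ⟨v, Finset.mem_erase.mpr ⟨hv0, hv⟩⟩) h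

lemma code_length : ∀ (n : ℕ) (s : Finset (Fin (m + 1))), s.card ≤ n → 0 ∈ s → Closed q s →
    (code q s).length = s.card - 1 := by
  intro n
  induction n with
  | zero => intro s hcard h0s _; exact absurd (Finset.card_pos.mpr ⟨0, h0s⟩) (by omega)
  | succ n ih =>
    intro s hcard h0s hcl
    rw [code]
    split_ifs with h
    · set v := (leaves q s).min' h with hv
      have hve : v ∈ s.erase 0 := min'_leaves_mem q h
      have hvs : v ∈ s := Finset.mem_of_mem_erase hve
      have hvne : v ≠ 0 := Finset.ne_of_mem_erase hve
      have hrec := ih (s.erase v) (by have := Finset.card_erase_of_mem hvs; omega)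
        (Finset.mem_erase.mpr ⟨Ne.symm hvne, h0s⟩)
        (closed_erase hcl ((leaves q s).min'_mem h))
      have hcard2 : 2 ≤ s.card := by
        have hsub : ({0, v} : Finset (Fin (m+1))) ⊆ s := by
          intro x hx
          rcases Finset.mem_insert.mp hx with rfl | hx
          · exact h0s
          · rw [Finset.mem_singleton.mp hx]; exact hvs
        have : ({0, v} : Finset (Fin (m+1))).card = 2 := by
          rw [Finset.card_insert_of_notMem (by simpa using Ne.symm hvne)]; rfl
        calc 2 = ({0, v} : Finset (Fin (m+1))).card := this.symm
          _ ≤ s.card := Finset.card_le_card hsub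
      simp only [List.length_cons, hrec, Finset.card_erase_of_mem hvs]
      omega
    · have he : s.erase 0 = ∅ := by
        by_contra hne
        exact h (leaves_nonempty h0 hac (Finset.nonempty_of_ne_empty hne))
      have hce := Finset.card_erase_of_mem h0s
      rw [he] at hce
      simp only [Finset.card_empty] at hce
      simp only [List.length_nil]
      omega

lemma code_getLast? : ∀ (n : ℕ) (s : Finset (Fin (m + 1))), s.card ≤ n → 0 ∈ s → Closed q s →
    code q s ≠ [] → (code q s).getLast? = some 0 := by
  intro n
  induction n with
  | zero => intro s hcard h0s _; exact absurd (Finset.card_pos.mpr ⟨0, h0s⟩) (by omega)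
  | succ n ih =>
    intro s hcard h0s hcl hne
    by_cases h : (leaves q s).Nonempty
    · set v := (leaves q s).min' h with hv
      have hve : v ∈ s.erase 0 := min'_leaves_mem q h
      have hvs : v ∈ s := Finset.mem_of_mem_erase hve
      have hvne : v ≠ 0 := Finset.ne_of_mem_erase hve
      have h0e : (0 : Fin (m+1)) ∈ s.erase v := Finset.mem_erase.mpr ⟨Ne.symm hvne, h0s⟩
      have hcle : Closed q (s.erase v) := closed_erase hcl ((leaves q s).min'_mem h)
      have hcne : s.card ≤ n + 1 := hcard
      have hc1 : code q s = q v :: code q (s.erase v) := by rw [code, dif_pos h]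
      rw [hc1]
      rcases heq : code q (s.erase v) with _ | ⟨a, t⟩
      · -- last element: q v, show q v = 0
        have hlen := code_length h0 hac (s.erase v).card (s.erase v) le_rfl h0e hcle
        rw [heq] at hlen
        simp only [List.length_nil] at hlen
        have hec : (s.erase v).card ≤ 1 := by omega
        have hqv : q v ∈ s.erase v := by
          refine Finset.mem_erase.mpr ⟨?_, hcl v hvs hvne⟩
          intro hqvv
          have := depth_q_lt h0 hac hvne
          rw [hqvv] at this
          omega
        have : q v = 0 := by
          have := Finset.card_le_one.mp hec (q v) hqv 0 h0e
          exact this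
        rw [this]
        rfl
      · rw [List.getLast?_cons_cons]
        rw [← heq]
        exact ih (s.erase v) (by have := Finset.card_erase_of_mem hvs; omega) h0e hcle
          (by rw [heq]; exact List.cons_ne_nil a t)
    · rw [code, dif_neg h] at hne
      exact absurd rfl hne

end Prufer

theorem card_acyclic_le (hm : 1 ≤ m) :
    Nat.card {p : Fin m → Fin (m + 1) // Acyclic p} ≤ (m + 1) ^ (m - 1) := by
  classical
  have key : Function.Injective
      (fun pp : {p : Fin m → Fin (m + 1) // Acyclic p} =>
        (fun i : Fin (m - 1) => (code (stepFn pp.1) Finset.univ).getD i 0)) := by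
    rintro ⟨p, hp⟩ ⟨p', hp'⟩ hΦ
    simp only at hΦ
    set q := stepFn p with hq
    set q' := stepFn p' with hq'
    have h0 : q 0 = 0 := Fin.cons_zero _ _
    have h0' : q' 0 = 0 := Fin.cons_zero _ _
    have hclu : Closed q Finset.univ := fun v _ _ => Finset.mem_univ _
    have hclu' : Closed q' Finset.univ := fun v _ _ => Finset.mem_univ _
    have h0u : (0 : Fin (m+1)) ∈ Finset.univ := Finset.mem_univ _
    have hcu : (Finset.univ : Finset (Fin (m+1))).card = m + 1 := by
      simp
    have hlen : (code q Finset.univ).length = m := by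
      rw [code_length h0 hp _ _ le_rfl h0u hclu, hcu]
      omega
    have hlen' : (code q' Finset.univ).length = m := by
      rw [code_length h0' hp' _ _ le_rfl h0u hclu', hcu]
      omega
    have hLL : code q Finset.univ = code q' Finset.univ := by
      apply List.ext_getElem (by rw [hlen, hlen'])
      intro i h1 h2
      by_cases hi : i < m - 1
      · have egd : ∀ (L : List (Fin (m+1))) (h : i < L.length), L.getD i 0 = L[i] :=
          fun L h => by rw [List.getD_eq_getElem?_getD, List.getElem?_eq_getElem h,
            Option.getD_some]
        have := congrFun hΦ ⟨i, hi⟩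
        simp only at this
        rwa [egd _ h1, egd _ h2] at this
      · have him : i = m - 1 := by rw [hlen] at h1; omega
        have hne : code q Finset.univ ≠ [] := by
          intro hcontra; rw [hcontra] at hlen; simp at hlen; omega
        have hne' : code q' Finset.univ ≠ [] := by
          intro hcontra; rw [hcontra] at hlen'; simp at hlen'; omega
        have hl1 := code_getLast? h0 hp _ _ le_rfl h0u hclu hne
        have hl2 := code_getLast? h0' hp' _ _ le_rfl h0u hclu' hne'
        rw [List.getLast?_eq_getElem?, List.getElem?_eq_getElem (by omega)] at hl1 hl2
        have e1 : (code q Finset.univ)[(code q Finset.univ).length - 1] =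
            (code q Finset.univ)[i]'h1 := by
          congr 1
          omega
        have e2 : (code q' Finset.univ)[(code q' Finset.univ).length - 1] =
            (code q' Finset.univ)[i]'h2 := by
          congr 1
          omega
        rw [e1] at hl1
        rw [e2] at hl2
        rw [Option.some_inj.mp hl1, Option.some_inj.mp hl2]
    have hqq : ∀ v : Fin (m+1), v ≠ 0 → q v = q' v := fun v hv =>
      code_inj h0 hp h0' hp' (m+1) Finset.univ (by omega) h0u hclu hclu' hLL v (Finset.mem_univ v) hv
    refine Subtype.ext (funext fun k => ?_)
    have := hqq k.succ (Fin.succ_ne_zero k)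
    rwa [hq, hq', stepFn, stepFn, Fin.cons_succ, Fin.cons_succ] at this
  calc Nat.card {p : Fin m → Fin (m + 1) // Acyclic p}
      ≤ Nat.card (Fin (m - 1) → Fin (m + 1)) := Nat.card_le_card_of_injective _ key
    _ = (m + 1) ^ (m - 1) := by
        rw [Nat.card_eq_fintype_card, Fintype.card_fun]
        simp


end Combinatorics

instance (m : ℕ) : (volume : Measure (Fin m → V3)).IsAddHaarMeasure := ⟨⟩

lemma Matrix.det_one_sub_of_isNilpotent {n : Type*} [DecidableEq n] [Fintype n]
    {M : Matrix n n ℝ} (hM : IsNilpotent M) : (1 - M).det = 1 := by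
  have h1 : M.charpoly = Polynomial.X ^ Fintype.card n := by
    have h := Matrix.isNilpotent_charpoly_sub_pow_of_isNilpotent hM
    rw [← sub_eq_zero]
    exact h.eq_zero
  have h2 : Polynomial.eval 1 M.charpoly = (1 - M).det := by
    rw [Matrix.charpoly, _root_.eval_det, Matrix.matPolyEquiv_charmatrix]
    rw [Polynomial.eval_sub, Polynomial.eval_X, Polynomial.eval_C]
    congr 1
  rw [← h2, h1]
  simp

lemma LinearMap.det_one_sub_of_isNilpotent {E : Type*} [AddCommGroup E] [Module ℝ E]
    [Module.Finite ℝ E] [Module.Free ℝ E] {N : E →ₗ[ℝ] E} (hN : IsNilpotent N) :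
    LinearMap.det (1 - N) = 1 := by
  classical
  let b := Module.Free.chooseBasis ℝ E
  rw [← LinearMap.det_toMatrix b]
  have h : (LinearMap.toMatrix b b) (1 - N) = 1 - (LinearMap.toMatrix b b) N := by
    rw [map_sub, LinearMap.toMatrix_one]
  rw [h]
  refine Matrix.det_one_sub_of_isNilpotent ?_
  obtain ⟨n, hn⟩ := hN
  refine ⟨n, ?_⟩
  have hp := LinearMap.toMatrix_pow b N n
  rw [hn, map_zero] at hp
  exact hp

lemma gamma_const : Real.sqrt π ^ 3 / Real.Gamma ((3 : ℝ) / 2 + 1) = 4 * π / 3 := by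
  have h32 : Real.Gamma ((3:ℝ)/2 + 1) = (3/2) * Real.Gamma ((3:ℝ)/2) :=
    Real.Gamma_add_one (by norm_num)
  have h12 : Real.Gamma ((3:ℝ)/2) = (1/2) * Real.Gamma ((1:ℝ)/2) := by
    have h := Real.Gamma_add_one (s := (1:ℝ)/2) (by norm_num)
    have e : (1:ℝ)/2 + 1 = (3:ℝ)/2 := by norm_num
    rw [e] at h
    exact h
  have hhalf : Real.Gamma ((1:ℝ)/2) = Real.sqrt π := Real.Gamma_one_half_eq
  have hsq : Real.sqrt π ^ 2 = π := Real.sq_sqrt pi_pos.le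
  have hpos : 0 < Real.sqrt π := Real.sqrt_pos.mpr pi_pos
  rw [h32, h12, hhalf]
  rw [pow_succ, hsq]
  field_simp
  ring

lemma volume_ball_V3 (c : V3) {ε : ℝ} (hε : 0 ≤ ε) :
    volume (Metric.closedBall c ε) = ENNReal.ofReal (4 * π / 3 * ε ^ 3) := by
  rw [EuclideanSpace.volume_closedBall]
  have hc : Fintype.card (Fin 3) = 3 := by simp
  rw [hc]
  have : ((3 : ℕ) : ℝ) / 2 + 1 = (3:ℝ)/2 + 1 := by norm_num
  rw [this, gamma_const]
  rw [← ENNReal.ofReal_pow hε, ← ENNReal.ofReal_mul (by positivity)]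
  congr 1
  ring

variable {m : ℕ}

lemma iter_zero' {q : Fin (m+1) → Fin (m+1)} (h0 : q 0 = 0) (n : ℕ) : q^[n] 0 = 0 := by
  induction n with
  | zero => rfl
  | succ n ih => rw [Function.iterate_succ_apply', ih, h0]

lemma iter_stable' {q : Fin (m+1) → Fin (m+1)} (h0 : q 0 = 0) {v : Fin (m + 1)} {a b : ℕ}
    (h : q^[a] v = 0) (hab : a ≤ b) : q^[b] v = 0 := by
  have hb : b = (b - a) + a := by omega
  rw [hb, Function.iterate_add_apply, h, iter_zero' h0]

/-- `Fin.cons 0 y` with explicit type. -/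
def consz (y : Fin m → V3) : Fin (m + 1) → V3 := Fin.cons 0 y

@[simp] lemma consz_zero (y : Fin m → V3) : consz y 0 = 0 := rfl
@[simp] lemma consz_succ (y : Fin m → V3) (k : Fin m) : consz y k.succ = y k := by
  simp [consz]

/-- The nilpotent "parent" shear map on configuration space. -/
def nilMap (p : Fin m → Fin (m + 1)) : (Fin m → V3) →ₗ[ℝ] (Fin m → V3) where
  toFun y := fun k => consz y (p k)
  map_add' y y' := by
    funext k
    have h : ∀ v, consz (y + y') v = consz y v + consz y' v := by
      intro v
      induction v using Fin.cases <;> simp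
    exact h (p k)
  map_smul' c y := by
    funext k
    have h : ∀ v, consz (c • y) v = c • consz y v := by
      intro v
      induction v using Fin.cases <;> simp
    exact h (p k)

@[simp] lemma nilMap_apply (p : Fin m → Fin (m + 1)) (y : Fin m → V3) (k : Fin m) :
    nilMap p y k = consz y (p k) := rfl

lemma cons_nilMap (p : Fin m → Fin (m + 1)) (y : Fin m → V3) (v : Fin (m + 1)) :
    consz (nilMap p y) v = consz y (stepFn p v) := by
  induction v using Fin.cases with
  | zero => simp [stepFn]
  | succ k => simp [stepFn]

lemma cons_nilMap_pow (p : Fin m → Fin (m + 1)) :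
    ∀ (n : ℕ) (y : Fin m → V3) (v : Fin (m + 1)),
      consz ((nilMap p ^ n) y) v = consz y ((stepFn p)^[n] v) := by
  intro n
  induction n with
  | zero => intro y v; simp
  | succ n ih =>
    intro y v
    rw [pow_succ, Function.iterate_succ_apply']
    rw [Module.End.mul_apply]
    rw [ih (nilMap p y) v, cons_nilMap]

lemma nilMap_nilpotent {p : Fin m → Fin (m + 1)} (hp : Acyclic p) : IsNilpotent (nilMap p) := by
  have h0 : stepFn p 0 = 0 := Fin.cons_zero _ _
  refine ⟨(Finset.univ.sup fun v : Fin (m+1) => Nat.find (hp v)), ?_⟩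
  apply LinearMap.ext
  intro y
  funext k
  have h1 := cons_nilMap_pow p (Finset.univ.sup fun v : Fin (m+1) => Nat.find (hp v)) y k.succ
  have h2 : (stepFn p)^[Finset.univ.sup fun v : Fin (m+1) => Nat.find (hp v)] k.succ = 0 :=
    iter_stable' h0 (Nat.find_spec (hp k.succ))
      (Finset.le_sup (f := fun v : Fin (m+1) => Nat.find (hp v)) (Finset.mem_univ k.succ))
  rw [h2] at h1
  simp only [consz_succ, consz_zero] at h1
  simpa using h1

/-- The set of configurations compatible with the tree structure `p`. -/
def pieceSet (m : ℕ) (x₀ : V3) (ε : ℝ) (p : Fin m → Fin (m + 1)) : Set (Fin m → V3) :=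
  {y | ∀ k : Fin m, ‖y k - (Fin.cons x₀ y : Fin (m + 1) → V3) (p k)‖ ≤ ε}

lemma cons_decomp (x₀ : V3) (y : Fin m → V3) (v : Fin (m + 1)) :
    (Fin.cons x₀ y : Fin (m + 1) → V3) v
      = consz y v + (Fin.cons x₀ (fun _ => (0:V3)) : Fin (m + 1) → V3) v := by
  induction v using Fin.cases <;> simp

lemma pieceSet_eq (x₀ : V3) (ε : ℝ) (p : Fin m → Fin (m + 1)) :
    pieceSet m x₀ ε p = ⇑(1 - nilMap p) ⁻¹'
      (Set.univ.pi fun k : Fin m =>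
        Metric.closedBall ((Fin.cons x₀ (fun _ => (0:V3)) : Fin (m + 1) → V3) (p k)) ε) := by
  ext y
  simp only [pieceSet, Set.mem_setOf_eq, Set.mem_preimage, Set.mem_pi, Set.mem_univ,
    forall_true_left, Metric.mem_closedBall, dist_eq_norm]
  refine forall_congr' fun k => ?_
  have h1 : (⇑(1 - nilMap p) y) k = y k - consz y (p k) := by
    simp [LinearMap.sub_apply]
  rw [h1, cons_decomp x₀ y (p k), sub_sub]

lemma volume_pieceSet (x₀ : V3) {ε : ℝ} (hε : 0 ≤ ε) {p : Fin m → Fin (m + 1)}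
    (hp : Acyclic p) :
    volume (pieceSet m x₀ ε p) = ENNReal.ofReal (4 * π / 3 * ε ^ 3) ^ m := by
  have hdet : LinearMap.det (1 - nilMap p) = 1 :=
    LinearMap.det_one_sub_of_isNilpotent (nilMap_nilpotent hp)
  rw [pieceSet_eq, MeasureTheory.Measure.addHaar_preimage_linearMap volume
    (by rw [hdet]; norm_num), hdet]
  rw [volume_pi_pi]
  have h : ∀ k : Fin m,
      volume (Metric.closedBall ((Fin.cons x₀ (fun _ => (0:V3)) : Fin (m + 1) → V3) (p k)) ε)
        = ENNReal.ofReal (4 * π / 3 * ε ^ 3) := fun k => volume_ball_V3 _ hε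
  simp only [h]
  rw [Finset.prod_const]
  simp

lemma clusterSet_subset_iUnion (x₀ : V3) (ε : ℝ) :
    clusterSet m x₀ ε ⊆
      ⋃ pp : {p : Fin m → Fin (m + 1) // Acyclic p}, pieceSet m x₀ ε pp.1 := by
  classical
  intro y hy
  set z : Fin (m + 1) → V3 := Fin.cons x₀ y with hz
  set R : Fin (m + 1) → Fin (m + 1) → Prop := fun a b => ‖z a - z b‖ ≤ ε with hR
  have hch : ∀ v : Fin (m + 1), ∃ n, ∃ f : ℕ → Fin (m + 1),
      f 0 = v ∧ f n = 0 ∧ ∀ i < n, R (f i) (f (i + 1)) := by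
    intro v
    have hv : Relation.ReflTransGen R v 0 := hy v 0
    induction hv using Relation.ReflTransGen.head_induction_on with
    | refl => exact ⟨0, fun _ => 0, rfl, rfl, fun i hi => absurd hi (by omega)⟩
    | @head a c hac hrt ih =>
      obtain ⟨n, f, hf0, hfn, hchain⟩ := ih
      refine ⟨n + 1, fun i => if i = 0 then a else f (i - 1), by simp, by
        simp only [Nat.add_one_ne_zero, if_neg, Nat.add_sub_cancel]
        exact hfn, ?_⟩
      intro i hi
      rcases Nat.eq_zero_or_pos i with rfl | hipos
      · simpa [hf0] using hac
      · have h1 : i ≠ 0 := by omega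
        have h2 : i + 1 ≠ 0 := by omega
        simp only [if_neg h1, if_neg h2, Nat.add_sub_cancel]
        have h3 : i - 1 + 1 = i := by omega
        have h4 := hchain (i - 1) (by omega)
        rwa [h3] at h4
  have hstep : ∀ k : Fin m, ∃ w, R k.succ w ∧ Nat.find (hch w) < Nat.find (hch k.succ) := by
    intro k
    obtain ⟨f, hf0, hfn, hchain⟩ := Nat.find_spec (hch k.succ)
    have hpos : 0 < Nat.find (hch k.succ) := by
      rcases Nat.eq_zero_or_pos (Nat.find (hch k.succ)) with h | h
      · exfalso
        rw [h] at hfn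
        rw [hf0] at hfn
        exact Fin.succ_ne_zero k hfn
      · exact h
    refine ⟨f 1, by simpa [hf0] using hchain 0 hpos, ?_⟩
    have h3 : Nat.find (hch k.succ) - 1 + 1 = Nat.find (hch k.succ) := by omega
    have hwit : ∃ g : ℕ → Fin (m + 1), g 0 = f 1 ∧ g (Nat.find (hch k.succ) - 1) = 0 ∧
        ∀ i < Nat.find (hch k.succ) - 1, R (g i) (g (i + 1)) := by
      refine ⟨fun i => f (i + 1), rfl, ?_, fun i hi => hchain (i + 1) (by omega)⟩
      show f (Nat.find (hch k.succ) - 1 + 1) = 0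
      rw [h3]
      exact hfn
    have h5 : Nat.find (hch (f 1)) ≤ Nat.find (hch k.succ) - 1 := Nat.find_le hwit
    omega
  choose p hpR hpD using hstep
  have hdepth : ∀ (n : ℕ) (v : Fin (m + 1)), Nat.find (hch v) ≤ n →
      ∃ j, (stepFn p)^[j] v = 0 := by
    intro n
    induction n with
    | zero =>
      intro v hv
      obtain ⟨f, hf0, hfn, _⟩ := Nat.find_spec (hch v)
      have h : Nat.find (hch v) = 0 := by omega
      rw [h] at hfn
      rw [hf0] at hfn
      exact ⟨0, hfn⟩
    | succ n ih =>
      intro v hv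
      rcases Fin.eq_zero_or_eq_succ v with rfl | ⟨k, rfl⟩
      · exact ⟨0, rfl⟩
      · obtain ⟨j, hj⟩ := ih (p k) (by have := hpD k; omega)
        refine ⟨j + 1, ?_⟩
        rw [Function.iterate_succ_apply]
        have hs : stepFn p k.succ = p k := Fin.cons_succ _ _ _
        rw [hs]
        exact hj
  have hacyc : Acyclic p := fun v => hdepth (Nat.find (hch v)) v le_rfl
  refine Set.mem_iUnion.mpr ⟨⟨p, hacyc⟩, fun k => ?_⟩
  have h2 : ‖z k.succ - z (p k)‖ ≤ ε := hpR k
  rw [show z k.succ = y k from Fin.cons_succ _ _ _] at h2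
  exact h2


/-- Volume bound for connected cluster configurations: the Lebesgue measure of
`Δ_m(x₀,ε)` in `ℝ^{3m}` is at most `(m+1)^{m−1} (4π/3)^m ε^{3m}`. -/
theorem volume_clusterSet_le (ε : ℝ) (hε : 0 < ε) (m : ℕ) (hm : 1 ≤ m) (x₀ : V3) :
    volume (clusterSet m x₀ ε) ≤
      ENNReal.ofReal (((m : ℝ) + 1) ^ (m - 1) * (4 * π / 3) ^ m * ε ^ (3 * m)) := by
  classical
  haveI : Fintype {p : Fin m → Fin (m + 1) // Acyclic p} := Fintype.ofFinite _
  have hcard : Fintype.card {p : Fin m → Fin (m + 1) // Acyclic p} ≤ (m + 1) ^ (m - 1) := by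
    rw [← Nat.card_eq_fintype_card]
    exact card_acyclic_le hm
  have step1 : volume (clusterSet m x₀ ε) ≤
      ∑' pp : {p : Fin m → Fin (m + 1) // Acyclic p}, volume (pieceSet m x₀ ε pp.1) :=
    le_trans (measure_mono (clusterSet_subset_iUnion x₀ ε)) (measure_iUnion_le _)
  have step2 : ∑' pp : {p : Fin m → Fin (m + 1) // Acyclic p}, volume (pieceSet m x₀ ε pp.1)
      ≤ (Fintype.card {p : Fin m → Fin (m + 1) // Acyclic p}) •
          ENNReal.ofReal (4 * π / 3 * ε ^ 3) ^ m := by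
    rw [tsum_fintype]
    have := Finset.sum_le_card_nsmul Finset.univ
      (fun pp : {p : Fin m → Fin (m + 1) // Acyclic p} => volume (pieceSet m x₀ ε pp.1))
      (ENNReal.ofReal (4 * π / 3 * ε ^ 3) ^ m)
      (fun pp _ => le_of_eq (volume_pieceSet x₀ hε.le pp.2))
    simpa using this
  have step3 : (Fintype.card {p : Fin m → Fin (m + 1) // Acyclic p}) •
        ENNReal.ofReal (4 * π / 3 * ε ^ 3) ^ m
      ≤ ((((m : ℕ) + 1) ^ (m - 1) : ℕ) : ℝ≥0∞) * ENNReal.ofReal (4 * π / 3 * ε ^ 3) ^ m := by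
    rw [nsmul_eq_mul]
    exact mul_le_mul_left (by exact_mod_cast Nat.cast_le.mpr hcard) _
  refine le_trans step1 (le_trans step2 (le_trans step3 (le_of_eq ?_)))
  rw [← ENNReal.ofReal_pow (by positivity), ← ENNReal.ofReal_natCast,
    ← ENNReal.ofReal_mul (by positivity)]
  congr 1
  push_cast
  rw [mul_pow, pow_mul]
  ring
end
end
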